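/- arXiv:2502.10710 — 5 statements merged into one kernel-verified Lean document; each statement's English description precedes it below -/
import Mathlib

section
/- Let {D_1,...,D_m} be a nontrivial (v,m,k,λ)-SEDF in a finite abelian group G with m ≥ 3, set D = D_1 ∪ ... ∪ D_m, and let χ be a nonprincipal character of G such that χ(D) ≠ 0. Then for each j with 1 ≤ j ≤ m, the real numbers |χ(D)|², |χ(D_j)|² and |χ(D∖D_j)|² are positive integers. -/
/-- A `(v,m,k,λ)`-strong external difference family in a finite abelian group `G`. -/
def IsSEDF {G : Type*} [CommGroup G] [Fintype G] [DecidableEq G]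
    {m : ℕ} (D : Fin m → Finset G) (k lam : ℕ) : Prop :=
  0 < m ∧ 0 < k ∧ 0 < lam ∧
  (∀ i, (D i).card = k) ∧
  (∀ i j, i ≠ j → Disjoint (D i) (D j)) ∧
  ∀ j : Fin m, ∀ g : G,
    (∑ l ∈ Finset.univ.filter (fun l => l ≠ j),
      (((D l) ×ˢ (D j)).filter (fun x => x.1 * x.2⁻¹ = g)).card)
    = if g = 1 then 0 else lam

open Finset Polynomial

lemma char_sum_zero {G : Type*} [CommGroup G] [Fintype G] (χ : G →* ℂ) (hχ : χ ≠ 1) :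
    ∑ g : G, χ g = 0 := by
  obtain ⟨h, hh⟩ : ∃ h, χ h ≠ 1 := by
    by_contra hc
    push_neg at hc
    exact hχ (MonoidHom.ext fun g => (hc g).trans rfl)
  have key : χ h * ∑ g : G, χ g = ∑ g : G, χ g := by
    rw [Finset.mul_sum]
    simp_rw [← map_mul]
    exact Fintype.sum_equiv (Equiv.mulLeft h) _ _ (fun g => rfl)
  have : (χ h - 1) * ∑ g : G, χ g = 0 := by ring_nf; linear_combination key
  rcases mul_eq_zero.mp this with h1 | h2
  · exact absurd (sub_eq_zero.mp h1) hh
  · exact h2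

lemma char_val_integral {G : Type*} [CommGroup G] [Fintype G] (χ : G →* ℂ) (g : G) :
    IsIntegral ℤ (χ g) := by
  refine ⟨X ^ (Fintype.card G) - C 1, monic_X_pow_sub_C 1 Fintype.card_ne_zero, ?_⟩
  have : χ g ^ (Fintype.card G) = 1 := by rw [← map_pow, pow_card_eq_one, map_one]
  simp [this]

lemma char_sum_integral {G : Type*} [CommGroup G] [Fintype G] (χ : G →* ℂ) (s : Finset G) :
    IsIntegral ℤ (∑ g ∈ s, χ g) :=
  IsIntegral.sum (fun g => χ g) fun g _ => char_val_integral χ g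

lemma char_conj {G : Type*} [CommGroup G] [Fintype G] (χ : G →* ℂ) (g : G) :
    (starRingEnd ℂ) (χ g) = χ g⁻¹ := by
  have h1 : χ g * χ g⁻¹ = 1 := by rw [← map_mul, mul_inv_cancel, map_one]
  have habs : ‖χ g‖ = 1 := by
    have hp : χ g ^ (Fintype.card G) = 1 := by rw [← map_pow, pow_card_eq_one, map_one]
    exact Complex.norm_eq_one_of_pow_eq_one hp Fintype.card_ne_zero
  have h2 : χ g * (starRingEnd ℂ) (χ g) = 1 := by
    rw [Complex.mul_conj, Complex.normSq_eq_norm_sq, habs]; norm_num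
  have hne : χ g ≠ 0 := by
    intro h0; rw [h0, zero_mul] at h1; exact one_ne_zero h1.symm
  exact mul_left_cancel₀ hne (h2.trans h1.symm)

lemma char_normSq_integral {G : Type*} [CommGroup G] [Fintype G] (χ : G →* ℂ) (s : Finset G) :
    IsIntegral ℤ ((Complex.normSq (∑ g ∈ s, χ g) : ℝ) : ℂ) := by
  have : ((Complex.normSq (∑ g ∈ s, χ g) : ℝ) : ℂ)
      = (∑ g ∈ s, χ g) * (starRingEnd ℂ) (∑ g ∈ s, χ g) := (Complex.mul_conj _).symm
  rw [this, map_sum]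
  simp_rw [char_conj]
  exact (char_sum_integral χ s).mul (IsIntegral.sum (fun g => χ g⁻¹) fun g _ => char_val_integral χ g⁻¹)

lemma exists_nat_of_rat {x : ℝ} (q : ℚ) (hq : x = (q : ℝ)) (hint : IsIntegral ℤ ((x : ℝ) : ℂ))
    (hx : 0 < x) : ∃ n : ℕ, 0 < n ∧ x = n := by
  have h1 : IsIntegral ℤ ((algebraMap ℚ ℂ) q) := by
    have : ((x : ℝ) : ℂ) = (algebraMap ℚ ℂ) q := by rw [hq]; push_cast; simp
    rwa [this] at hint
  have h2 : IsIntegral ℤ q := (isIntegral_algebraMap_iff (algebraMap ℚ ℂ).injective).mp h1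
  obtain ⟨z, hz⟩ := IsIntegrallyClosed.isIntegral_iff.mp h2
  have hxz : x = (z : ℝ) := by rw [hq, ← hz]; push_cast [algebraMap_int_eq]; norm_num
  have hz0 : 0 < z := by exact_mod_cast hxz ▸ hx
  exact ⟨z.toNat, by omega, by rw [hxz]; exact_mod_cast (Int.toNat_of_nonneg hz0.le).symm⟩

lemma sedf_key {G : Type*} [CommGroup G] [Fintype G] [DecidableEq G]
    {m k lam : ℕ} (D : Fin m → Finset G) (h : IsSEDF D k lam)
    (χ : G →* ℂ) (hχ : χ ≠ 1) (i : Fin m) :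
    (∑ l ∈ Finset.univ.filter (fun l => l ≠ i), ∑ g ∈ D l, χ g) *
      (starRingEnd ℂ) (∑ g ∈ D i, χ g) = -(lam : ℂ) := by
  have hconj : (starRingEnd ℂ) (∑ g ∈ D i, χ g) = ∑ y ∈ D i, χ y⁻¹ := by
    rw [map_sum]; exact Finset.sum_congr rfl fun y _ => char_conj χ y
  rw [hconj, Finset.sum_mul]
  have hl : ∀ l, (∑ g ∈ D l, χ g) * ∑ y ∈ D i, χ y⁻¹
      = ∑ g : G, ((((D l) ×ˢ (D i)).filter (fun x => x.1 * x.2⁻¹ = g)).card : ℂ) * χ g := by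
    intro l
    rw [Finset.sum_mul_sum]
    have e1 : ∑ x ∈ D l, ∑ y ∈ D i, χ x * χ y⁻¹ = ∑ p ∈ (D l) ×ˢ (D i), χ (p.1 * p.2⁻¹) := by
      rw [Finset.sum_product]
      exact Finset.sum_congr rfl fun x _ => Finset.sum_congr rfl fun y _ => by
        rw [map_mul]
    rw [e1, ← Finset.sum_fiberwise ((D l) ×ˢ (D i)) (fun p => p.1 * p.2⁻¹)
      (fun p => χ (p.1 * p.2⁻¹))]
    refine Finset.sum_congr rfl fun g _ => ?_
    calc ∑ p ∈ ((D l) ×ˢ (D i)).filter (fun p => p.1 * p.2⁻¹ = g), χ (p.1 * p.2⁻¹)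
        = ∑ _p ∈ ((D l) ×ˢ (D i)).filter (fun p => p.1 * p.2⁻¹ = g), χ g :=
          Finset.sum_congr rfl fun p hp => by rw [(Finset.mem_filter.mp hp).2]
      _ = _ := by rw [Finset.sum_const, nsmul_eq_mul]
  calc ∑ l ∈ Finset.univ.filter (fun l => l ≠ i), (∑ g ∈ D l, χ g) * ∑ y ∈ D i, χ y⁻¹
      = ∑ l ∈ Finset.univ.filter (fun l => l ≠ i),
          ∑ g : G, ((((D l) ×ˢ (D i)).filter (fun x => x.1 * x.2⁻¹ = g)).card : ℂ) * χ g :=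
        Finset.sum_congr rfl fun l _ => hl l
    _ = ∑ g : G, ∑ l ∈ Finset.univ.filter (fun l => l ≠ i),
          ((((D l) ×ˢ (D i)).filter (fun x => x.1 * x.2⁻¹ = g)).card : ℂ) * χ g :=
        Finset.sum_comm
    _ = ∑ g : G, ((if g = (1:G) then (0:ℕ) else lam) : ℂ) * χ g := by
        refine Finset.sum_congr rfl fun g _ => ?_
        rw [← Finset.sum_mul]
        congr 1
        rw [← Nat.cast_sum, h.2.2.2.2.2 i g]
        split_ifs <;> simp
    _ = -(lam : ℂ) := by
        have hz := char_sum_zero χ hχ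
        have : ∑ g : G, ((if g = (1:G) then (0:ℕ) else lam) : ℂ) * χ g
            = (lam : ℂ) * (∑ g : G, χ g) - ∑ g : G, (if g = (1:G) then (lam : ℂ) * χ g else 0) := by
          rw [Finset.mul_sum, ← Finset.sum_sub_distrib]
          refine Finset.sum_congr rfl fun g _ => ?_
          split_ifs <;> simp
        rw [this, Finset.sum_ite_eq' Finset.univ (1:G) (fun g => (lam:ℂ) * χ g), hz]
        simp

/-- For a nontrivial `(v,m,k,λ)`-SEDF with `m ≥ 3` and a nonprincipal character `χ` with
`χ(D) ≠ 0` (where `D = D_1 ∪ ⋯ ∪ D_m`), the real numbers `|χ(D)|²`, `|χ(D_j)|²`, and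
`|χ(D∖D_j)|²` are positive integers for each `j`. -/
theorem sedf_char_normSq_int {G : Type*} [CommGroup G] [Fintype G] [DecidableEq G]
    {v m k lam : ℕ} (hv : Fintype.card G = v)
    (D : Fin m → Finset G) (h : IsSEDF D k lam) (hk : 1 < k) (hm : 3 ≤ m)
    (χ : G →* ℂ) (hχ : χ ≠ 1)
    (hD : (∑ g ∈ Finset.univ.biUnion D, χ g) ≠ 0) (j : Fin m) :
    (∃ n : ℕ, 0 < n ∧ Complex.normSq (∑ g ∈ Finset.univ.biUnion D, χ g) = n) ∧
    (∃ n : ℕ, 0 < n ∧ Complex.normSq (∑ g ∈ D j, χ g) = n) ∧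
    (∃ n : ℕ, 0 < n ∧ Complex.normSq (∑ g ∈ (Finset.univ.biUnion D) \ D j, χ g) = n) := by
  classical
  set S : ℂ := ∑ g ∈ Finset.univ.biUnion D, χ g with hSdef
  set A : Fin m → ℂ := fun i => ∑ g ∈ D i, χ g with hA
  have hpd : ((Finset.univ : Finset (Fin m)) : Set (Fin m)).PairwiseDisjoint D :=
    fun x _ y _ hxy => h.2.2.2.2.1 x y hxy
  have hS : S = ∑ l : Fin m, A l := Finset.sum_biUnion hpd
  have hlamR : (0:ℝ) < lam := by exact_mod_cast h.2.2.1
  have hlamC : -(lam:ℂ) ≠ 0 := neg_ne_zero.mpr (Nat.cast_ne_zero.mpr h.2.2.1.ne')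
  have key : ∀ i : Fin m, (S - A i) * (starRingEnd ℂ) (A i) = -(lam : ℂ) := by
    intro i
    have hkey := sedf_key D h χ hχ i
    rw [Finset.filter_ne', Finset.sum_erase_eq_sub (Finset.mem_univ i), ← hS] at hkey
    exact hkey
  set t : ℝ := Complex.normSq S with htdef
  have ht : 0 < t := Complex.normSq_pos.mpr hD
  have htne : t ≠ 0 := ht.ne'
  set c : Fin m → ℝ := fun i => (Complex.normSq (A i) - lam) / t with hc
  have hr : ∀ i, c i * t = Complex.normSq (A i) - lam := fun i => div_mul_cancel₀ _ htne
  have hCS : ∀ i, A i = ((c i : ℝ) : ℂ) * S := by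
    intro i
    have hmc : A i * (starRingEnd ℂ) (A i) = ((Complex.normSq (A i) : ℝ) : ℂ) :=
      Complex.mul_conj _
    have h1 : S * (starRingEnd ℂ) (A i) = ((Complex.normSq (A i) - lam : ℝ) : ℂ) := by
      push_cast
      linear_combination key i + hmc
    have h2 : (starRingEnd ℂ) S * A i = ((Complex.normSq (A i) - lam : ℝ) : ℂ) := by
      have h2' := congrArg (starRingEnd ℂ) h1
      simpa [mul_comm] using h2'
    have h3 : ((t : ℝ) : ℂ) * A i = ((Complex.normSq (A i) - lam : ℝ) : ℂ) * S := by
      have h3' : S * ((starRingEnd ℂ) S * A i)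
          = S * ((Complex.normSq (A i) - lam : ℝ) : ℂ) := by rw [h2]
      rw [← mul_assoc, Complex.mul_conj] at h3'
      rw [htdef]
      linear_combination h3'
    have htC : ((t : ℝ) : ℂ) ≠ 0 := Complex.ofReal_ne_zero.mpr htne
    rw [hc]
    push_cast
    rw [div_mul_eq_mul_div, eq_div_iff htC]
    push_cast at h3
    linear_combination h3
  have hquad : ∀ i, c i ^ 2 * t = c i * t + lam := by
    intro i
    have e1 : Complex.normSq (A i) = c i ^ 2 * t := by
      rw [hCS i, Complex.normSq_mul, Complex.normSq_ofReal, htdef]; ring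
    have := hr i
    linarith [hr i, e1.symm.le]
  have hsum : ∑ i, c i = 1 := by
    have h4 : (((∑ i, c i : ℝ)) : ℂ) * S = S := by
      push_cast
      rw [Finset.sum_mul]
      rw [Finset.sum_congr rfl fun i _ => (hCS i).symm, ← hS]
    have h5 : ((((∑ i, c i : ℝ)) : ℂ) - 1) * S = 0 := by linear_combination h4
    rcases mul_eq_zero.mp h5 with h6 | h6
    · have : (((∑ i, c i : ℝ)) : ℂ) = 1 := by linear_combination h6
      exact_mod_cast this
    · exact absurd h6 hD
  have hAne : ∀ i, A i ≠ 0 := by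
    intro i hz
    have := key i
    rw [hz, map_zero, mul_zero] at this
    exact hlamC this.symm
  have hSAne : ∀ i, S - A i ≠ 0 := by
    intro i hz
    have := key i
    rw [hz, zero_mul] at this
    exact hlamC this.symm
  -- not all c i are equal to c j
  have hnotall : ¬ (∀ i, c i = c j) := by
    intro hall
    have hsc : ∑ i, c i = (m : ℝ) * c j := by
      rw [Finset.sum_congr rfl fun i _ => hall i, Finset.sum_const, Finset.card_univ,
        Fintype.card_fin, nsmul_eq_mul]
    have hcj : (m:ℝ) * c j = 1 := by rw [← hsc, hsum]
    have hm3 : (3:ℝ) ≤ m := by exact_mod_cast hm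
    have h0 : 0 < c j := by nlinarith
    have h1 : c j < 1 := by nlinarith
    nlinarith [hquad j, mul_pos (mul_pos h0 (sub_pos.mpr h1)) ht]
  push_neg at hnotall
  obtain ⟨i₁, hi₁⟩ := hnotall
  have hαβ1 : c i₁ + c j = 1 := by
    have h0 : t * (c i₁ - c j) * (c i₁ + c j - 1) = 0 := by
      linear_combination hquad i₁ - hquad j
    rcases mul_eq_zero.mp h0 with h1 | h1
    · rcases mul_eq_zero.mp h1 with h2 | h2
      · exact absurd h2 htne
      · exact absurd (sub_eq_zero.mp h2) hi₁
    · linarith [sub_eq_zero.mp h1]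
  have hprod : c i₁ * c j * t = -(lam:ℝ) := by
    linear_combination (c i₁ * t) * hαβ1 - hquad i₁
  have hmem : ∀ i, c i = c i₁ ∨ c i = c j := by
    intro i
    have h0 : (c i - c i₁) * (c i - c j) * t = 0 := by
      linear_combination hquad i - c i * t * hαβ1 + hprod
    rcases mul_eq_zero.mp h0 with h1 | h1
    · rcases mul_eq_zero.mp h1 with h2 | h2
      · exact Or.inl (sub_eq_zero.mp h2)
      · exact Or.inr (sub_eq_zero.mp h2)
    · exact absurd h1 htne
  have hα0 : c i₁ ≠ 0 := by
    intro h0; rw [h0] at hprod; simp at hprod; exact absurd hprod h.2.2.1.ne'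
  have hβ0 : c j ≠ 0 := by
    intro h0; rw [h0] at hprod; simp at hprod; exact absurd hprod h.2.2.1.ne'
  have hα1 : c i₁ ≠ 1 := by
    intro h0; apply hβ0; linarith
  have hβ1 : c j ≠ 1 := by
    intro h0; apply hα0; linarith
  -- counting
  set p1 : ℕ := (Finset.univ.filter (fun i => c i = c i₁)).card with hp1
  set p2 : ℕ := (Finset.univ.filter (fun i => ¬ c i = c i₁)).card with hp2
  have hp12 : p1 + p2 = m := by
    rw [hp1, hp2, Finset.card_filter_add_card_filter_not, Finset.card_univ,
      Fintype.card_fin]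
  have hsum2 : (p1:ℝ) * c i₁ + (p2:ℝ) * c j = 1 := by
    have hs := hsum
    rw [← Finset.sum_filter_add_sum_filter_not Finset.univ (fun i => c i = c i₁)] at hs
    have e1 : ∑ i ∈ Finset.univ.filter (fun i => c i = c i₁), c i = (p1:ℝ) * c i₁ := by
      rw [Finset.sum_congr rfl fun i hi => (Finset.mem_filter.mp hi).2, Finset.sum_const,
        nsmul_eq_mul]
    have e2 : ∑ i ∈ Finset.univ.filter (fun i => ¬ c i = c i₁), c i = (p2:ℝ) * c j := by
      rw [Finset.sum_congr rfl fun i hi => ?_, Finset.sum_const, nsmul_eq_mul]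
      rcases hmem i with hh | hh
      · exact absurd hh (Finset.mem_filter.mp hi).2
      · exact hh
    rw [e1, e2] at hs
    exact hs
  have hpm : (p1:ℝ) + (p2:ℝ) = (m:ℝ) := by exact_mod_cast hp12
  have hpne : (p1:ℝ) - (p2:ℝ) ≠ 0 := by
    intro h0
    have h1 : (p1:ℝ) * (c i₁ + c j) = 1 := by linear_combination hsum2 + c j * h0
    rw [hαβ1, mul_one] at h1
    have hm3 : (3:ℝ) ≤ (m:ℝ) := by exact_mod_cast hm
    linarith
  set q : ℚ := (1 - (p2:ℚ)) / ((p1:ℚ) - (p2:ℚ)) with hqdef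
  have hq : c i₁ = (q:ℝ) := by
    have hcast : ((q:ℚ):ℝ) = ((1:ℝ) - (p2:ℝ)) / ((p1:ℝ) - (p2:ℝ)) := by
      rw [hqdef]; push_cast; ring
    rw [hcast, eq_div_iff hpne]
    linear_combination hsum2 - (p2:ℝ) * hαβ1
  have hβq : c j = ((1 - q : ℚ):ℝ) := by push_cast; rw [← hq]; linarith
  have hαne : c i₁ ^ 2 - c i₁ ≠ 0 := by
    intro h0
    rcases mul_eq_zero.mp (show c i₁ * (c i₁ - 1) = 0 by linarith [h0]; ) with h1 | h1
    · exact hα0 h1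
    · exact hα1 (by linarith [sub_eq_zero.mp h1])
  set qt : ℚ := (lam:ℚ) / (q^2 - q) with hqtdef
  have hqt : t = (qt:ℝ) := by
    have hcast : ((qt:ℚ):ℝ) = (lam:ℝ) / ((c i₁)^2 - c i₁) := by
      rw [hqtdef]; push_cast; rw [← hq]
    rw [hcast, eq_div_iff hαne]
    linear_combination (c i₁ * t) * hαβ1 - hprod
  refine ⟨?_, ?_, ?_⟩
  · exact exists_nat_of_rat qt hqt
      (char_normSq_integral χ (Finset.univ.biUnion D)) ht
  · -- normSq (A j) = c j * t + lam
    have hval : Complex.normSq (A j) = (((1 - q) * qt + lam : ℚ) : ℝ) := by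
      have h1 : Complex.normSq (A j) = c j * t + lam := by linarith [hr j]
      rw [h1, hβq, hqt]; push_cast; ring
    have hpos : 0 < Complex.normSq (A j) := Complex.normSq_pos.mpr (hAne j)
    exact exists_nat_of_rat _ hval (char_normSq_integral χ (D j)) hpos
  · have hsub : D j ⊆ Finset.univ.biUnion D :=
      Finset.subset_biUnion_of_mem D (Finset.mem_univ j)
    have hsd : ∑ g ∈ (Finset.univ.biUnion D) \ D j, χ g = S - A j :=
      Finset.sum_sdiff_eq_sub hsub
    have hSA : S - A j = ((1 - c j : ℝ) : ℂ) * S := by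
      rw [hCS j]; push_cast; ring
    have hval : Complex.normSq (∑ g ∈ (Finset.univ.biUnion D) \ D j, χ g)
        = ((q^2 * qt : ℚ) : ℝ) := by
      rw [hsd, hSA, Complex.normSq_mul, Complex.normSq_ofReal, ← htdef]
      have h1cj : (1 : ℝ) - c j = c i₁ := by linarith
      rw [h1cj, hq, hqt]; push_cast; ring
    have hpos : 0 < Complex.normSq (∑ g ∈ (Finset.univ.biUnion D) \ D j, χ g) := by
      rw [hsd]; exact Complex.normSq_pos.mpr (hSAne j)
    exact exists_nat_of_rat _ hval (char_normSq_integral χ _) hpos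
end

section
/- Let u = p_1^{u_1}···p_t^{u_t} be the prime power decomposition of a positive integer u, and let w be a positive integer such that u is self-conjugate modulo w. Suppose p_i divides w for i = 1,...,s and p_i does not divide w for i = s+1,...,t. If X ∈ ℤ[ζ_w] satisfies X·conj(X) ≡ 0 (mod u), then X ≡ 0 (mod p_1^{⌊u_1/2⌋}···p_s^{⌊u_s/2⌋}·p_{s+1}^{⌊(u_{s+1}+1)/2⌋}···p_t^{⌊(u_t+1)/2⌋}) in ℤ[ζ_w]. -/
set_option maxHeartbeats 1000000
set_option synthInstance.maxHeartbeats 400000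

open Polynomial

/-- A prime `p` is self-conjugate modulo `w`: writing `w = p^s · u'` with `gcd(u',p) = 1`,
there exists `r` with `p^r ≡ -1 (mod u')`. -/
def SelfConjPrime (p w : ℕ) : Prop :=
  ∃ r : ℕ, (p : ZMod ((w / p ^ w.factorization p))) ^ r = -1

/-- A positive integer `n` is self-conjugate modulo `w` if all of its prime divisors are. -/
def SelfConjugate (n w : ℕ) : Prop :=
  ∀ p : ℕ, p.Prime → p ∣ n → SelfConjPrime p w

/-- Key reducedness-style lemma: in a `ZMod p`-algebra generated by an element `t` with
`t ^ n = 1` and `p ∤ n`, nilpotent elements of the image of `aeval t` vanish. -/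
lemma lemU {p n : ℕ} (hp : p.Prime) (hpn : ¬ p ∣ n)
    {T : Type*} [CommRing T] [Algebra (ZMod p) T] (t : T) (ht : t ^ n = 1)
    (g : (ZMod p)[X]) (hnil : IsNilpotent (aeval t g)) : aeval t g = 0 := by
  haveI : Fact p.Prime := ⟨hp⟩
  obtain ⟨k, hk⟩ := hnil
  rcases Nat.eq_zero_or_pos k with rfl | hk0
  · have h1 : (1 : T) = 0 := by simpa using hk
    calc aeval t g = aeval t g * 1 := (mul_one _).symm
    _ = 0 := by rw [h1, mul_zero]
  set ψ : (ZMod p)[X] →ₐ[ZMod p] T := aeval t with hψ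
  set K : Ideal (ZMod p)[X] := RingHom.ker (ψ : (ZMod p)[X] →+* T) with hKdef
  have hXn : (X ^ n - 1 : (ZMod p)[X]) ∈ K := by
    simp [hKdef, RingHom.mem_ker, hψ, ht]
  have hgk : g ^ k ∈ K := by
    simp [hKdef, RingHom.mem_ker, map_pow, hψ, hk]
    exact hk
  have hsq : Squarefree (X ^ n - 1 : (ZMod p)[X]) := by
    have hn0 : ((n : ℕ) : ZMod p) ≠ 0 := by
      rw [Ne, ZMod.natCast_eq_zero_iff]; exact hpn
    have := Polynomial.separable_X_pow_sub_C (1 : ZMod p) hn0 one_ne_zero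
    rw [map_one] at this
    exact this.squarefree
  have hfX : Submodule.IsPrincipal.generator K ∣ X ^ n - 1 :=
    (Submodule.IsPrincipal.mem_iff_generator_dvd K).mp hXn
  have hfg : Submodule.IsPrincipal.generator K ∣ g ^ k :=
    (Submodule.IsPrincipal.mem_iff_generator_dvd K).mp hgk
  have hfsq : Squarefree (Submodule.IsPrincipal.generator K) := hsq.squarefree_of_dvd hfX
  have : Submodule.IsPrincipal.generator K ∣ g := (hfsq.dvd_pow_iff_dvd hk0.ne').mp hfg
  have hgK : g ∈ K := (Submodule.IsPrincipal.mem_iff_generator_dvd K).mpr this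
  simpa [hKdef, RingHom.mem_ker] using hgK

noncomputable abbrev OO (ζ : ℂ) : Subalgebra ℤ ℂ := Algebra.adjoin ℤ ({ζ} : Set ℂ)

noncomputable def zO (ζ : ℂ) : OO ζ := ⟨ζ, Algebra.self_mem_adjoin_singleton ℤ ζ⟩

lemma conj_zeta {w : ℕ} (hw : 0 < w) {ζ : ℂ} (hζw : ζ ^ w = 1) :
    (starRingEnd ℂ) ζ = ζ ^ (w - 1) := by
  have hζ0 : ζ ≠ 0 := by
    intro h; rw [h, zero_pow hw.ne'] at hζw; exact zero_ne_one hζw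
  have habs : ‖ζ‖ ^ w = 1 := by
    rw [← norm_pow, hζw, norm_one]
  have habs1 : ‖ζ‖ = 1 := by
    rcases (pow_eq_one_iff_cases).mp habs with h | h | h
    · omega
    · exact h
    · nlinarith [norm_nonneg ζ, h.1]
  have hmc : ζ * (starRingEnd ℂ) ζ = 1 := by
    rw [Complex.mul_conj]
    norm_cast
    rw [Complex.normSq_eq_norm_sq, habs1]; norm_num
  have hmc2 : ζ * ζ ^ (w - 1) = 1 := by
    rw [← pow_succ']
    have : w - 1 + 1 = w := by omega
    rw [this, hζw]
  exact mul_left_cancel₀ hζ0 (hmc.trans hmc2.symm)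

lemma conj_mem {w : ℕ} (hw : 0 < w) {ζ : ℂ} (hζw : ζ ^ w = 1) {x : ℂ} (hx : x ∈ OO ζ) :
    (starRingEnd ℂ) x ∈ OO ζ := by
  induction hx using Algebra.adjoin_induction with
  | mem y hy =>
      rcases Set.mem_singleton_iff.mp hy with rfl
      rw [conj_zeta hw hζw]
      exact pow_mem (Algebra.self_mem_adjoin_singleton ℤ _) _
  | algebraMap r => simpa using Subalgebra.algebraMap_mem (OO ζ) r
  | add x y _ _ hx hy => rw [map_add]; exact add_mem hx hy
  | mul x y _ _ hx hy => rw [map_mul]; exact mul_mem hx hy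

noncomputable def conjO {w : ℕ} (hw : 0 < w) {ζ : ℂ} (hζw : ζ ^ w = 1) : OO ζ →+* OO ζ where
  toFun x := ⟨(starRingEnd ℂ) x.1, conj_mem hw hζw x.2⟩
  map_one' := by ext; simp
  map_mul' x y := by ext; simp
  map_zero' := by ext; simp
  map_add' x y := by ext; simp

@[simp] lemma conjO_coe {w : ℕ} (hw : 0 < w) {ζ : ℂ} (hζw : ζ ^ w = 1) (x : OO ζ) :
    ((conjO hw hζw x : OO ζ) : ℂ) = (starRingEnd ℂ) x.1 := rfl

lemma conjO_zO {w : ℕ} (hw : 0 < w) {ζ : ℂ} (hζw : ζ ^ w = 1) :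
    conjO hw hζw (zO ζ) = zO ζ ^ (w - 1) := by
  ext
  push_cast [conjO_coe, zO]
  exact conj_zeta hw hζw

lemma exists_poly {ζ : ℂ} (x : OO ζ) : ∃ g : ℤ[X], aeval (zO ζ) g = x := by
  have hx : (x : ℂ) ∈ Algebra.adjoin ℤ ({ζ} : Set ℂ) := x.2
  rw [Algebra.adjoin_singleton_eq_range_aeval] at hx
  obtain ⟨g, hg⟩ := hx
  refine ⟨g, Subtype.ext ?_⟩
  have : ((aeval (zO ζ) g : OO ζ) : ℂ) = aeval ζ g := by
    have h := Polynomial.aeval_algHom_apply (OO ζ).val (zO ζ) g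
    simpa [zO] using h.symm
  rw [this]
  exact hg

lemma zO_pow_w {w : ℕ} {ζ : ℂ} (hζw : ζ ^ w = 1) : (zO ζ) ^ w = 1 := by
  ext; push_cast [zO]; exact hζw


lemma core {A : Type*} [CommRing A] {w : ℕ} (hw : 0 < w) (z : A) (hz : z ^ w = 1)
    (c : A →+* A) (hcz : c z = z ^ (w - 1))
    (hgen : ∀ x : A, ∃ g : ℤ[X], aeval z g = x)
    {p r w' : ℕ} (hp : p.Prime) (hpw' : ¬ p ∣ w') (hw'w : w' ∣ w)
    (hpr : w' ∣ p ^ r + 1)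
    (q : A) (hqp : q ∣ ((p : ℕ) : A)) (hqz : q ∣ (1 - z ^ w'))
    (X : A) (hdvd : q ∣ X * c X) : q ∣ X := by
  classical
  haveI : Fact p.Prime := ⟨hp⟩
  by_cases hqu : IsUnit q
  · exact hqu.dvd
  set I : Ideal A := Ideal.span {q} with hI
  have hItop : I ≠ ⊤ := by
    rw [hI, Ne, Ideal.span_singleton_eq_top]; exact hqu
  haveI : Nontrivial (A ⧸ I) := Ideal.Quotient.nontrivial_iff.mpr hItop
  set mk : A →+* A ⧸ I := Ideal.Quotient.mk I with hmk
  have hmem : ∀ y : A, q ∣ y → mk y = 0 := fun y hy =>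
    Ideal.Quotient.eq_zero_iff_mem.mpr (Ideal.mem_span_singleton.mpr hy)
  have hpT : ((p : ℕ) : A ⧸ I) = 0 := by
    rw [← map_natCast mk]; exact hmem _ hqp
  haveI hcharP : CharP (A ⧸ I) p := (CharP.charP_iff_prime_eq_zero hp).mpr hpT
  letI : Algebra (ZMod p) (A ⧸ I) := ZMod.algebra _ p
  haveI : IsScalarTower ℤ (ZMod p) (A ⧸ I) :=
    IsScalarTower.of_algebraMap_eq' (RingHom.ext_int _ _)
  set t : A ⧸ I := mk z with htdef
  have htw' : t ^ w' = 1 := by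
    have h := hmem _ hqz
    rw [map_sub, map_one, map_pow, sub_eq_zero] at h
    exact h.symm
  have htw : t ^ w = 1 := by
    obtain ⟨d, rfl⟩ := hw'w
    rw [pow_mul, htw', one_pow]
  have htpr : t ^ (p ^ r) = t ^ (w - 1) := by
    have h1 : t ^ (p ^ r) * t ^ w = t ^ (p ^ r + 1) * t ^ (w - 1) := by
      rw [← pow_add, ← pow_add]
      congr 1
      omega
    have h2 : t ^ (p ^ r + 1) = 1 := by
      obtain ⟨cc, hcc⟩ := hpr
      rw [hcc, pow_mul, htw', one_pow]
    rw [htw, h2, mul_one, one_mul] at h1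
    exact h1
  obtain ⟨g, hg⟩ := hgen X
  haveI : ExpChar (A ⧸ I) p := ExpChar.prime hp
  set F : A ⧸ I →ₐ[ZMod p] A ⧸ I :=
    AlgHom.mk' (iterateFrobenius (A ⧸ I) p r) (fun cc x => by
      rw [Algebra.smul_def, Algebra.smul_def, map_mul]
      congr 1
      rw [iterateFrobenius_def, ← map_pow]
      congr 1
      exact ZMod.pow_card_pow cc) with hF
  have hFapp : ∀ x : A ⧸ I, F x = x ^ (p ^ r) := fun x => by
    simp only [hF, AlgHom.coe_mk', iterateFrobenius_def]
  have hconj : mk (c X) = aeval t (g.map (algebraMap ℤ (ZMod p))) ^ (p ^ r) := by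
    have e1 : c X = aeval (z ^ (w - 1)) g := by
      rw [← hg, ← hcz]
      exact (Polynomial.aeval_algHom_apply (c.toIntAlgHom) z g).symm
    have e2 : mk (aeval (z ^ (w - 1)) g) = aeval (t ^ (w - 1)) g := by
      have h := Polynomial.aeval_algHom_apply (mk.toIntAlgHom) (z ^ (w - 1)) g
      have h2 : mk.toIntAlgHom (z ^ (w - 1)) = t ^ (w - 1) := by
        show mk (z ^ (w - 1)) = t ^ (w - 1)
        rw [map_pow]
      rw [h2] at h
      exact h.symm
    have e3 : (aeval (t ^ (w - 1)) g : A ⧸ I)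
        = aeval (t ^ (w - 1)) (g.map (algebraMap ℤ (ZMod p))) := by
      rw [Polynomial.aeval_map_algebraMap]
    have e4 : aeval (t ^ (p ^ r)) (g.map (algebraMap ℤ (ZMod p)))
        = (aeval t (g.map (algebraMap ℤ (ZMod p)))) ^ (p ^ r) := by
      have h := Polynomial.aeval_algHom_apply F t (g.map (algebraMap ℤ (ZMod p)))
      rw [hFapp, hFapp] at h
      exact h
    rw [e1, e2, e3, ← htpr, e4]
  have hXg : mk X = aeval t (g.map (algebraMap ℤ (ZMod p))) := by
    rw [← hg]
    have h := Polynomial.aeval_algHom_apply (mk.toIntAlgHom) z g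
    rw [show mk (aeval z g) = aeval t g from (h.symm : _)]
    rw [Polynomial.aeval_map_algebraMap]
  have hX0 : mk X = 0 := by
    have hnil : IsNilpotent (aeval t (g.map (algebraMap ℤ (ZMod p)))) := by
      refine ⟨p ^ r + 1, ?_⟩
      have h0 : mk (X * c X) = 0 := hmem _ hdvd
      rw [map_mul, hXg, hconj] at h0
      rw [pow_add, pow_one, mul_comm]
      exact h0
    have := lemU hp hpw' t htw' (g.map (algebraMap ℤ (ZMod p))) hnil
    rw [hXg, this]
  exact Ideal.mem_span_singleton.mp (Ideal.Quotient.eq_zero_iff_mem.mp hX0)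

lemma zO_isUnit {w : ℕ} (hw : 0 < w) {ζ : ℂ} (hζw : ζ ^ w = 1) : IsUnit (zO ζ) := by
  apply IsUnit.of_mul_eq_one (a := zO ζ) (zO ζ ^ (w - 1))
  rw [← pow_succ']
  have h : w - 1 + 1 = w := by omega
  rw [h]
  exact zO_pow_w hζw

/-- `p` is associated to `(1 - ζ^{w/p^a})^φ(p^a)` in `ℤ[ζ]`. -/
lemma p_assoc {w : ℕ} (hw : 0 < w) {ζ : ℂ} (hζ : IsPrimitiveRoot ζ w)
    {p a : ℕ} (hp : p.Prime) (ha : 0 < a) (hpa : p ^ a ∣ w) :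
    Associated ((p : ℕ) : OO ζ) ((1 - zO ζ ^ (w / p ^ a)) ^ (p ^ a).totient) := by
  classical
  haveI : Fact p.Prime := ⟨hp⟩
  set w' := w / p ^ a with hw'
  have hww' : w = w' * p ^ a := by
    rw [hw', Nat.div_mul_cancel hpa]
  have hpapos : 0 < p ^ a := pow_pos hp.pos a
  haveI : NeZero (p ^ a) := ⟨hpapos.ne'⟩
  have hζ' : IsPrimitiveRoot (ζ ^ w') (p ^ a) := hζ.pow hw hww'
  -- the complex-number identity
  obtain ⟨k, rfl⟩ : ∃ k, a = k + 1 := ⟨a - 1, by omega⟩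
  have e1 : eval 1 (cyclotomic (p ^ (k + 1)) ℂ) = p :=
    Polynomial.eval_one_cyclotomic_prime_pow k
  have e2 : cyclotomic (p ^ (k + 1)) ℂ
      = ∏ μ ∈ primitiveRoots (p ^ (k + 1)) ℂ, (X - C μ) :=
    cyclotomic_eq_prod_X_sub_primitiveRoots hζ'
  have hprod : ((p : ℕ) : ℂ) = ∏ μ ∈ primitiveRoots (p ^ (k + 1)) ℂ, (1 - μ) := by
    rw [← e1, e2, eval_prod]
    simp
  -- lift to the subalgebra
  have key : ∀ s : Finset ℂ, (∀ μ ∈ s, μ ∈ primitiveRoots (p ^ (k + 1)) ℂ) →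
      ∃ Y : OO ζ, (Y : ℂ) = ∏ μ ∈ s, (1 - μ) ∧
        Associated ((1 - zO ζ ^ w') ^ s.card) Y := by
    intro s
    induction s using Finset.induction_on with
    | empty => exact fun _ => ⟨1, by simp, by simp⟩
    | insert _ _ hμs ih =>
      rename_i μ s
      intro hall
      obtain ⟨Y, hY, hYa⟩ := ih (fun x hx => hall x (Finset.mem_insert_of_mem hx))
      have hμ : IsPrimitiveRoot μ (p ^ (k + 1)) :=
        (mem_primitiveRoots hpapos).mp (hall μ (Finset.mem_insert_self μ s))
      obtain ⟨i, _, hi⟩ := hζ'.eq_pow_of_pow_eq_one hμ.pow_eq_one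
      obtain ⟨j, _, hj⟩ := hμ.eq_pow_of_pow_eq_one hζ'.pow_eq_one
      set yμ : OO ζ := 1 - zO ζ ^ (w' * i) with hyμ
      have hyμc : (yμ : ℂ) = 1 - μ := by
        push_cast [hyμ, zO]
        rw [pow_mul, hi]
      have hassoc : Associated (1 - zO ζ ^ w') yμ := by
        apply associated_of_dvd_dvd
        · rw [hyμ]
          have : zO ζ ^ (w' * i) = (zO ζ ^ w') ^ i := by rw [pow_mul]
          rw [this]
          exact one_sub_dvd_one_sub_pow _ _
        · have hzz : zO ζ ^ w' = (zO ζ ^ (w' * i)) ^ j := by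
            apply Subtype.ext
            push_cast [zO]
            rw [pow_mul, hi, hj]
          rw [hzz]
          exact one_sub_dvd_one_sub_pow _ _
      refine ⟨yμ * Y, ?_, ?_⟩
      · push_cast
        rw [hyμc, hY, Finset.prod_insert hμs]
      · rw [Finset.card_insert_of_notMem hμs, pow_succ, mul_comm]
        exact hassoc.mul_mul hYa
  obtain ⟨Y, hY, hYa⟩ := key _ (fun μ hμ => hμ)
  have hpY : ((p : ℕ) : OO ζ) = Y := by
    apply Subtype.ext
    push_cast
    rw [hY, ← hprod]
  rw [hpY]
  rw [hζ'.card_primitiveRoots] at hYa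
  exact hYa.symm

-- selfconj ⇒ w' ∣ p^r + 1
lemma selfconj_dvd {p w : ℕ} (hw : 0 < w) (hsc : SelfConjPrime p w) :
    ∃ r : ℕ, (w / p ^ w.factorization p) ∣ p ^ r + 1 := by
  obtain ⟨r, hr⟩ := hsc
  refine ⟨r, ?_⟩
  have hpos : 0 < w / p ^ w.factorization p := Nat.ordCompl_pos p hw.ne'
  haveI : NeZero (w / p ^ w.factorization p) := ⟨hpos.ne'⟩
  have : ((p ^ r + 1 : ℕ) : ZMod (w / p ^ w.factorization p)) = 0 := by
    push_cast
    rw [hr]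
    ring
  exact (ZMod.natCast_eq_zero_iff _ _).mp this

lemma pO_ne_zero {ζ : ℂ} {p : ℕ} (hp : p.Prime) : ((p : ℕ) : OO ζ) ≠ 0 := by
  intro h
  have : ((p : ℕ) : ℂ) = 0 := by
    have := congrArg (fun x : OO ζ => (x : ℂ)) h
    push_cast at this
    simpa using this
  exact_mod_cast hp.ne_zero (by exact_mod_cast this)

/-- Ramified case: `p ∣ w`. -/
lemma ramified {w : ℕ} (hw : 0 < w) {ζ : ℂ} (hζ : IsPrimitiveRoot ζ w)
    {p : ℕ} (hp : p.Prime) (hpw : p ∣ w) (hsc : SelfConjPrime p w)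
    (X : OO ζ) (e : ℕ)
    (hdvd : ((p : ℕ) : OO ζ) ^ e ∣ X * conjO hw hζ.pow_eq_one X) :
    ((p : ℕ) : OO ζ) ^ (e / 2) ∣ X := by
  classical
  have hζw : ζ ^ w = 1 := hζ.pow_eq_one
  set a := w.factorization p with hadef
  have ha : 0 < a := hp.factorization_pos_of_dvd hw.ne' hpw
  set w' := w / p ^ a with hw'def
  have hw'0 : 0 < w' := Nat.ordCompl_pos p hw.ne'
  have hpw' : ¬ p ∣ w' := Nat.not_dvd_ordCompl hp hw.ne'
  have hw'w : w' ∣ w := Nat.ordCompl_dvd w p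
  obtain ⟨r, hpr⟩ := selfconj_dvd hw hsc
  have massoc := p_assoc hw hζ hp ha (Nat.ordProj_dvd w p)
  set π : OO ζ := 1 - zO ζ ^ w' with hπdef
  set m := (p ^ a).totient with hmdef
  have hm : 0 < m := Nat.totient_pos.mpr (pow_pos hp.pos a)
  have hπ0 : π ≠ 0 := by
    intro h
    rw [h, zero_pow hm.ne'] at massoc
    exact pO_ne_zero hp ((associated_zero_iff_eq_zero _).mp massoc)
  have hπp : π ∣ ((p : ℕ) : OO ζ) :=
    dvd_trans (dvd_pow_self π hm.ne') massoc.symm.dvd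
  -- conjugation of π
  have hu₀ : IsUnit (-(zO ζ ^ ((w - 1) * w'))) := ((zO_isUnit hw hζw).pow _).neg
  have hcπ : conjO hw hζw π = (-(zO ζ ^ ((w - 1) * w'))) * π := by
    have h1 : conjO hw hζw π = 1 - zO ζ ^ ((w - 1) * w') := by
      rw [hπdef, map_sub, map_one, map_pow, conjO_zO, ← pow_mul]
    have h2 : zO ζ ^ ((w - 1) * w' + w') = 1 := by
      have h4 : w' ≤ w * w' := Nat.le_mul_of_pos_left w' hw
      have heq : (w - 1) * w' + w' = w * w' := by
        rw [Nat.sub_mul, one_mul]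
        omega
      rw [heq, pow_mul, zO_pow_w hζw, one_pow]
    rw [h1, hπdef]
    linear_combination -h2
  -- key induction on the power of π
  have key : ∀ j : ℕ, ∀ X : OO ζ, π ^ j ∣ X * conjO hw hζw X → π ^ (j / 2) ∣ X := by
    intro j
    induction j using Nat.strong_induction_on with
    | _ j IH =>
      intro X hXd
      by_cases hj2 : j < 2
      · interval_cases j <;> simp
      · push_neg at hj2
        have hπX : π ∣ X := by
          refine core hw (zO ζ) (zO_pow_w hζw) (conjO hw hζw) (conjO_zO hw hζw)
            exists_poly hp hpw' hw'w hpr π hπp (by rw [hπdef]) X ?_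
          exact dvd_trans (dvd_pow_self π (by omega : j ≠ 0)) hXd
        obtain ⟨X₁, hX₁⟩ := hπX
        have hXc : X * conjO hw hζw X
            = π ^ 2 * ((-(zO ζ ^ ((w - 1) * w'))) * (X₁ * conjO hw hζw X₁)) := by
          rw [hX₁, map_mul, hcπ]
          ring
        have hcancel : π ^ (j - 2) ∣ (-(zO ζ ^ ((w - 1) * w'))) * (X₁ * conjO hw hζw X₁) := by
          have hXd' : π ^ 2 * π ^ (j - 2) ∣
              π ^ 2 * ((-(zO ζ ^ ((w - 1) * w'))) * (X₁ * conjO hw hζw X₁)) := by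
            rw [← pow_add]
            have : 2 + (j - 2) = j := by omega
            rw [this, ← hXc]
            exact hXd
          exact (mul_dvd_mul_iff_left (pow_ne_zero 2 hπ0)).mp hXd'
        have hcancel2 : π ^ (j - 2) ∣ X₁ * conjO hw hζw X₁ :=
          (IsUnit.dvd_mul_left hu₀).mp hcancel
        have hIH := IH (j - 2) (by omega) X₁ hcancel2
        rw [hX₁]
        have : π ^ (j / 2) = π * π ^ ((j - 2) / 2) := by
          rw [← pow_succ']
          congr 1
          omega
        rw [this]
        exact mul_dvd_mul_left π hIH
  -- conclude
  have hπe : π ^ (m * e) ∣ X * conjO hw hζw X := by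
    have : Associated (((p : ℕ) : OO ζ) ^ e) (π ^ (m * e)) := by
      have := massoc.pow_pow (n := e)
      rwa [← pow_mul, mul_comm m e, mul_comm e m] at this
    exact this.symm.dvd.trans hdvd
  have hkey := key (m * e) X hπe
  have hmono : π ^ (m * (e / 2)) ∣ π ^ (m * e / 2) := by
    apply pow_dvd_pow
    rw [Nat.le_div_iff_mul_le (by norm_num)]
    calc m * (e / 2) * 2 = m * (e / 2 * 2) := by ring
    _ ≤ m * e := Nat.mul_le_mul_left m (Nat.div_mul_le_self e 2)
  have hfin : Associated (((p : ℕ) : OO ζ) ^ (e / 2)) (π ^ (m * (e / 2))) := by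
    have := massoc.pow_pow (n := e / 2)
    rwa [← pow_mul, mul_comm m (e/2), mul_comm (e/2) m] at this
  exact hfin.dvd.trans (hmono.trans hkey)

/-- Unramified case: `p ∤ w`. -/
lemma unramified {w : ℕ} (hw : 0 < w) {ζ : ℂ} (hζ : IsPrimitiveRoot ζ w)
    {p : ℕ} (hp : p.Prime) (hpw : ¬ p ∣ w) (hsc : SelfConjPrime p w)
    (X : OO ζ) (e : ℕ)
    (hdvd : ((p : ℕ) : OO ζ) ^ e ∣ X * conjO hw hζ.pow_eq_one X) :
    ((p : ℕ) : OO ζ) ^ ((e + 1) / 2) ∣ X := by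
  classical
  have hζw : ζ ^ w = 1 := hζ.pow_eq_one
  have ha : w.factorization p = 0 := Nat.factorization_eq_zero_of_not_dvd hpw
  obtain ⟨r, hpr⟩ := selfconj_dvd hw hsc
  rw [ha, pow_zero, Nat.div_one] at hpr
  -- induction on e
  induction e using Nat.strong_induction_on generalizing X with
  | _ e IH =>
    rcases Nat.eq_zero_or_pos e with rfl | he
    · simpa using one_dvd X
    have hpX : ((p : ℕ) : OO ζ) ∣ X := by
      refine core hw (zO ζ) (zO_pow_w hζw) (conjO hw hζw) (conjO_zO hw hζw)
        exists_poly hp hpw dvd_rfl hpr _ dvd_rfl ?_ X ?_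
      · rw [zO_pow_w hζw, sub_self]
        exact dvd_zero _
      · exact dvd_trans (dvd_pow_self _ he.ne') hdvd
    obtain ⟨X₁, hX₁⟩ := hpX
    rcases Nat.lt_or_ge e 2 with he2 | he2
    · have he1 : e = 1 := by omega
      subst he1
      rw [hX₁]
      norm_num
    · have hXc : X * conjO hw hζw X
          = ((p : ℕ) : OO ζ) ^ 2 * (X₁ * conjO hw hζw X₁) := by
        rw [hX₁, map_mul, map_natCast]
        ring
      have hcancel : ((p : ℕ) : OO ζ) ^ (e - 2) ∣ X₁ * conjO hw hζw X₁ := by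
        have h' : ((p : ℕ) : OO ζ) ^ 2 * ((p : ℕ) : OO ζ) ^ (e - 2)
            ∣ ((p : ℕ) : OO ζ) ^ 2 * (X₁ * conjO hw hζw X₁) := by
          rw [← pow_add]
          have : 2 + (e - 2) = e := by omega
          rw [this, ← hXc]
          exact hdvd
        exact (mul_dvd_mul_iff_left (pow_ne_zero 2 (pO_ne_zero hp))).mp h'
      have hIH := IH (e - 2) (by omega) X₁ hcancel
      rw [hX₁]
      have : ((p : ℕ) : OO ζ) ^ ((e + 1) / 2)
          = ((p : ℕ) : OO ζ) * ((p : ℕ) : OO ζ) ^ ((e - 2 + 1) / 2) := by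
        rw [← pow_succ']
        congr 1
        omega
      rw [this]
      exact mul_dvd_mul_left _ hIH

lemma natCoprime_isCoprime {ζ : ℂ} {a b : ℕ} (h : Nat.Coprime a b) :
    IsCoprime ((a : ℕ) : OO ζ) ((b : ℕ) : OO ζ) := by
  have hz : IsCoprime ((a : ℤ)) ((b : ℤ)) := by
    rw [Int.isCoprime_iff_gcd_eq_one, Int.gcd_natCast_natCast]
    exact h
  have := hz.map (algebraMap ℤ (OO ζ))
  simpa using this


/-- Let `u = p_1^{u_1} ⋯ p_t^{u_t}` (prime power decomposition) be self-conjugate modulo `w`,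
with `p_i ∣ w` exactly for `i < s`.  If `X ∈ ℤ[ζ_w]` satisfies `X·conj(X) ≡ 0 (mod u)`,
then `X ≡ 0 (mod ∏_{i<s} p_i^{⌊u_i/2⌋} · ∏_{i≥s} p_i^{⌊(u_i+1)/2⌋})` in `ℤ[ζ_w]`. -/
theorem cyclotomic_selfconj_divisibility
    (t s : ℕ) (hst : s ≤ t) (p : Fin t → ℕ) (e : Fin t → ℕ)
    (hp : ∀ i, (p i).Prime) (hinj : Function.Injective p) (he : ∀ i, 0 < e i)
    (u w : ℕ) (hu : u = ∏ i, p i ^ e i) (hw : 0 < w)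
    (hsc : SelfConjugate u w)
    (hsplit : ∀ i : Fin t, ((i : ℕ) < s ↔ p i ∣ w))
    (ζ : ℂ) (hζ : IsPrimitiveRoot ζ w)
    (X : ℂ) (hX : X ∈ Algebra.adjoin ℤ ({ζ} : Set ℂ))
    (hmod : ∃ Y ∈ Algebra.adjoin ℤ ({ζ} : Set ℂ), X * (starRingEnd ℂ) X = (u : ℂ) * Y) :
    ∃ Z ∈ Algebra.adjoin ℤ ({ζ} : Set ℂ),
      X = (∏ i : Fin t,
        if (i : ℕ) < s then (p i : ℂ) ^ (e i / 2) else (p i : ℂ) ^ ((e i + 1) / 2)) * Z := by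
  classical
  have hζw : ζ ^ w = 1 := hζ.pow_eq_one
  set XO : OO ζ := ⟨X, hX⟩ with hXO
  obtain ⟨Y, hY, hXY⟩ := hmod
  set YO : OO ζ := ⟨Y, hY⟩ with hYO
  have hmain : XO * conjO hw hζw XO = ((u : ℕ) : OO ζ) * YO := by
    apply Subtype.ext
    push_cast [conjO_coe]
    exact hXY
  -- the exponents
  set f : Fin t → ℕ := fun i => if (i : ℕ) < s then e i / 2 else (e i + 1) / 2 with hf
  have hdvd_i : ∀ i : Fin t, ((p i : ℕ) : OO ζ) ^ (f i) ∣ XO := by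
    intro i
    have hpu : p i ∣ u := by
      rw [hu]
      exact dvd_trans (dvd_pow_self (p i) (he i).ne') (Finset.dvd_prod_of_mem _ (Finset.mem_univ i))
    have hsci : SelfConjPrime (p i) w := hsc (p i) (hp i) hpu
    have hpeu : p i ^ e i ∣ u := by
      rw [hu]
      exact Finset.dvd_prod_of_mem (fun j => p j ^ e j) (Finset.mem_univ i)
    have hdvdO : ((p i : ℕ) : OO ζ) ^ (e i) ∣ XO * conjO hw hζw XO := by
      rw [hmain]
      refine Dvd.dvd.mul_right ?_ YO
      have : ((p i ^ e i : ℕ) : OO ζ) ∣ ((u : ℕ) : OO ζ) := Nat.cast_dvd_cast hpeu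
      rwa [Nat.cast_pow] at this
    rw [hf]
    by_cases hi : (i : ℕ) < s
    · simp only [hi, if_true]
      exact ramified hw hζ (hp i) ((hsplit i).mp hi) hsci XO (e i) hdvdO
    · simp only [hi, if_false]
      exact unramified hw hζ (hp i) (fun hc => hi ((hsplit i).mpr hc)) hsci XO (e i) hdvdO
  have hcop : ((Finset.univ : Finset (Fin t)) : Set (Fin t)).Pairwise
      (Function.onFun IsCoprime fun i => ((p i : ℕ) : OO ζ) ^ (f i)) := by
    intro i _ j _ hij
    have hnat : Nat.Coprime (p i ^ f i) (p j ^ f j) :=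
      Nat.Coprime.pow _ _ ((Nat.coprime_primes (hp i) (hp j)).mpr (fun hc => hij (hinj hc)))
    have := natCoprime_isCoprime (ζ := ζ) hnat
    simpa [Nat.cast_pow] using this
  have hprod : (∏ i : Fin t, ((p i : ℕ) : OO ζ) ^ (f i)) ∣ XO :=
    Finset.prod_dvd_of_coprime hcop (fun i _ => hdvd_i i)
  obtain ⟨ZO, hZO⟩ := hprod
  refine ⟨(ZO : ℂ), ZO.2, ?_⟩
  have hXeq : X = ((∏ i : Fin t, ((p i : ℕ) : OO ζ) ^ (f i) : OO ζ) : ℂ) * (ZO : ℂ) := by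
    have := congrArg (fun x : OO ζ => (x : ℂ)) hZO
    push_cast at this
    simpa using this
  rw [hXeq]
  congr 1
  push_cast
  apply Finset.prod_congr rfl
  intro i _
  rw [hf]
  split_ifs with hcase <;> simp [hcase]
end

section
/- Suppose there exists a (v,m,k,λ)-SEDF in a finite abelian group G with m ≥ 3. Let p and q be primes such that p^e exactly divides v and q^f exactly divides λ for some positive integers e and f, and suppose q is a primitive root modulo p^e. Let G_p be the Sylow p-subgroup of G. Then exp(G_p) ≤ v / q^{⌈f/2⌉}. -/
open Polynomial
open Polynomial

lemma JL_cyclo_irred {q n : ℕ} (hq : q.Prime) (hn : 0 < n)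
    (hord : orderOf (q : ZMod n) = n.totient) :
    Irreducible (cyclotomic n (ZMod q)) := by
  haveI : Fact q.Prime := ⟨hq⟩
  haveI : NeZero n := ⟨hn.ne'⟩
  have htot : 0 < n.totient := Nat.totient_pos.2 hn
  -- q is coprime to n
  have hu : IsUnit (q : ZMod n) := by
    have : (q : ZMod n) ^ n.totient = 1 := by
      rw [← hord]; exact pow_orderOf_eq_one _
    exact IsUnit.of_pow_eq_one this htot.ne'
  have hqn : ¬ q ∣ n := by
    intro hdvd
    have hcop : Nat.Coprime q n := (ZMod.isUnit_iff_coprime q n).1 hu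
    exact (hq.coprime_iff_not_dvd.1 hcop) hdvd
  set Φ : (ZMod q)[X] := cyclotomic n (ZMod q) with hΦ
  have hΦne : Φ ≠ 0 := cyclotomic_ne_zero n _
  have hΦdeg : Φ.natDegree = n.totient := natDegree_cyclotomic n _
  have hΦnu : ¬ IsUnit Φ := by
    intro hun
    have := natDegree_eq_zero_of_isUnit hun
    omega
  obtain ⟨g, hgi, hgd⟩ := WfDvdMonoid.exists_irreducible_factor hΦnu hΦne
  haveI : Fact (Irreducible g) := ⟨hgi⟩
  have hgne : g ≠ 0 := hgi.ne_zero
  set L := AdjoinRoot g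
  have hdpos : 0 < g.natDegree := hgi.natDegree_pos
  -- L is a finite field of cardinality q ^ deg g
  let pb : PowerBasis (ZMod q) L := AdjoinRoot.powerBasis hgne
  haveI : Fintype L := Module.fintypeOfFintype pb.basis
  have hcardL : Fintype.card L = q ^ g.natDegree := by
    rw [Module.card_fintype pb.basis, ZMod.card, Fintype.card_fin, AdjoinRoot.powerBasis_dim]
  -- the root is a primitive n-th root of unity
  have hroot : (cyclotomic n L).IsRoot (AdjoinRoot.root g) := by
    obtain ⟨h, hh⟩ := hgd
    have : aeval (AdjoinRoot.root g) Φ = 0 := by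
      rw [hh, map_mul, AdjoinRoot.aeval_eq, AdjoinRoot.mk_self, zero_mul]
    rw [IsRoot.def, ← map_cyclotomic n (algebraMap (ZMod q) L), eval_map, ← aeval_def]
    exact this
  haveI : NeZero (n : L) := by
    refine ⟨fun h0 => ?_⟩
    have : ((n : ZMod q) : L) = 0 := by push_cast; exact h0
    have hz : (n : ZMod q) = 0 := by
      have hinj := (algebraMap (ZMod q) L).injective
      apply hinj; simpa using this
    exact hqn ((ZMod.natCast_eq_zero_iff n q).1 hz)
  have hprim : IsPrimitiveRoot (AdjoinRoot.root g) n := isRoot_cyclotomic_iff.1 hroot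
  -- n divides q ^ deg g - 1
  have hndvd : n ∣ q ^ g.natDegree - 1 := by
    have hunit : IsUnit (AdjoinRoot.root g) := hprim.isUnit hn.ne'
    have horder : orderOf hunit.unit = n := by
      rw [← orderOf_units, IsUnit.unit_spec, ← hprim.eq_orderOf]
    have := orderOf_dvd_card (x := hunit.unit)
    rw [horder, Fintype.card_units, hcardL] at this
    exact this
  -- hence totient n ≤ deg g
  have hqd1 : 1 ≤ q ^ g.natDegree := Nat.one_le_pow _ _ hq.pos
  have hmod : (q : ZMod n) ^ g.natDegree = 1 := by
    have : (q ^ g.natDegree : ℕ) ≡ 1 [MOD n] := ((Nat.modEq_iff_dvd' hqd1).2 hndvd).symm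
    have := (ZMod.natCast_eq_natCast_iff _ _ _).2 this
    push_cast at this
    exact this
  have hle : n.totient ≤ g.natDegree := by
    have := orderOf_dvd_of_pow_eq_one hmod
    rw [hord] at this
    exact Nat.le_of_dvd hdpos this
  -- so g has the same degree as Φ and Φ is irreducible
  obtain ⟨h, hh⟩ := hgd
  have hhne : h ≠ 0 := by
    intro h0; rw [h0, mul_zero] at hh; exact hΦne hh
  have hdeg : g.natDegree + h.natDegree = n.totient := by
    rw [← hΦdeg, hh, natDegree_mul hgne hhne]
  have hgdeg : g.natDegree ≤ n.totient := by
    rw [← hΦdeg]; exact natDegree_le_of_dvd ⟨h, hh⟩ hΦne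
  have hh0 : h.natDegree = 0 := by omega
  obtain ⟨a, ha⟩ := natDegree_eq_zero.1 hh0
  have hane : a ≠ 0 := by
    intro h0; rw [h0, map_zero] at ha; exact hhne ha.symm
  have : Associated g Φ := by
    refine ⟨(Units.map C.toMonoidHom) (Units.mk0 a hane), ?_⟩
    rw [hh, ← ha]; rfl
  exact this.irreducible hgi

section NT
variable {n q : ℕ} {ζ : ℂ}

lemma JL_aeval_cyclo_zero (hζ : IsPrimitiveRoot ζ n) (hn : 0 < n) :
    aeval ζ (cyclotomic n ℤ) = 0 := by
  haveI : NeZero n := ⟨hn.ne'⟩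
  have : IsRoot (cyclotomic n ℂ) ζ := Polynomial.isRoot_cyclotomic_iff.2 hζ
  rw [aeval_def, eval₂_eq_eval_map]
  rw [show Polynomial.map (algebraMap ℤ ℂ) (cyclotomic n ℤ) = cyclotomic n ℂ from
    map_cyclotomic_int n ℂ]
  exact this

lemma JL_aeval_eq_zero_iff (hζ : IsPrimitiveRoot ζ n) (hn : 0 < n) (F : ℤ[X]) :
    aeval ζ F = 0 ↔ cyclotomic n ℤ ∣ F := by
  constructor
  · intro h0
    have hmapz : aeval ζ (Polynomial.map (algebraMap ℤ ℚ) F) = 0 := by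
      rw [aeval_map_algebraMap]; exact h0
    have hdvd : minpoly ℚ ζ ∣ Polynomial.map (algebraMap ℤ ℚ) F := minpoly.dvd ℚ ζ hmapz
    rw [← cyclotomic_eq_minpoly_rat hζ hn] at hdvd
    rw [show cyclotomic n ℚ = Polynomial.map (algebraMap ℤ ℚ) (cyclotomic n ℤ) from
      (map_cyclotomic_int n ℚ).symm] at hdvd
    exact (map_dvd_map _ (algebraMap ℤ ℚ).injective_int (cyclotomic.monic n ℤ)).1 hdvd
  · rintro ⟨H, rfl⟩
    rw [map_mul, JL_aeval_cyclo_zero hζ hn, zero_mul]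

/-- `q ∣ aeval ζ F` in `ℤ[ζ]` iff the cyclotomic polynomial mod `q` divides `F` mod `q`. -/
lemma JL_qdvd_iff (hζ : IsPrimitiveRoot ζ n) (hn : 0 < n) (hq : q.Prime) (F : ℤ[X]) :
    (∃ w : ℤ[X], aeval ζ F = (q : ℂ) * aeval ζ w) ↔
      cyclotomic n (ZMod q) ∣ Polynomial.map (Int.castRingHom (ZMod q)) F := by
  haveI : Fact q.Prime := ⟨hq⟩
  constructor
  · rintro ⟨w, hw⟩
    have h0 : aeval ζ (F - C (q : ℤ) * w) = 0 := by
      rw [map_sub, map_mul, aeval_C]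
      push_cast
      rw [hw]; ring
    obtain ⟨U, hU⟩ := (JL_aeval_eq_zero_iff hζ hn _).1 h0
    have := congrArg (Polynomial.map (Int.castRingHom (ZMod q))) hU
    rw [Polynomial.map_sub, Polynomial.map_mul, Polynomial.map_mul, map_C] at this
    have hqz : (Int.castRingHom (ZMod q)) ((q : ℕ) : ℤ) = 0 := by simp
    rw [hqz, map_zero, zero_mul, sub_zero, map_cyclotomic_int] at this
    exact ⟨_, this⟩
  · rintro ⟨Hbar, hHbar⟩
    obtain ⟨H, rfl⟩ := Polynomial.map_surjective (Int.castRingHom (ZMod q))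
      (show Function.Surjective ⇑(Int.castRingHom (ZMod q)) from ZMod.intCast_surjective) Hbar
    have hmap0 : Polynomial.map (Int.castRingHom (ZMod q)) (F - cyclotomic n ℤ * H) = 0 := by
      rw [Polynomial.map_sub, Polynomial.map_mul, map_cyclotomic_int, hHbar, sub_self]
    have hC : C (q : ℤ) ∣ F - cyclotomic n ℤ * H := by
      rw [C_dvd_iff_dvd_coeff]
      intro i
      have := congrArg (fun P => Polynomial.coeff P i) hmap0
      simp only [Polynomial.coeff_map, Polynomial.coeff_zero] at this
      exact_mod_cast (ZMod.intCast_zmod_eq_zero_iff_dvd _ q).1 this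
    obtain ⟨w, hw⟩ := hC
    refine ⟨w, ?_⟩
    have : F = cyclotomic n ℤ * H + C (q : ℤ) * w := by linear_combination hw
    rw [this, map_add, map_mul, map_mul, JL_aeval_cyclo_zero hζ hn, zero_mul, zero_add, aeval_C]
    push_cast; ring

lemma JL_prime_step (hζ : IsPrimitiveRoot ζ n) (hn : 0 < n) (hq : q.Prime)
    (hirr : Irreducible (cyclotomic n (ZMod q))) (F G : ℤ[X])
    (hFG : ∃ w : ℤ[X], aeval ζ F * aeval ζ G = (q : ℂ) * aeval ζ w) :
    (∃ w : ℤ[X], aeval ζ F = (q : ℂ) * aeval ζ w) ∨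
      (∃ w : ℤ[X], aeval ζ G = (q : ℂ) * aeval ζ w) := by
  haveI : Fact q.Prime := ⟨hq⟩
  have h1 : ∃ w : ℤ[X], aeval ζ (F * G) = (q : ℂ) * aeval ζ w := by
    obtain ⟨w, hw⟩ := hFG; exact ⟨w, by rw [map_mul, hw]⟩
  have h2 := (JL_qdvd_iff hζ hn hq _).1 h1
  rw [Polynomial.map_mul] at h2
  have hprime : Prime (cyclotomic n (ZMod q)) :=
    UniqueFactorizationMonoid.irreducible_iff_prime.1 hirr
  rcases hprime.2.2 _ _ h2 with h | h
  · exact Or.inl ((JL_qdvd_iff hζ hn hq F).2 h)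
  · exact Or.inr ((JL_qdvd_iff hζ hn hq G).2 h)

lemma JL_key (hζ : IsPrimitiveRoot ζ n) (hn : 0 < n) (hq : q.Prime)
    (hirr : Irreducible (cyclotomic n (ZMod q))) :
    ∀ (f : ℕ) (μ : ℤ) (F G : ℤ[X]), ¬ (q : ℤ) ∣ μ →
      aeval ζ F * aeval ζ G = (q : ℂ) ^ f * (μ : ℂ) →
      ∃ a b : ℕ, a + b = f ∧ (∃ w : ℤ[X], aeval ζ F = (q : ℂ) ^ a * aeval ζ w) ∧
        (∃ w : ℤ[X], aeval ζ G = (q : ℂ) ^ b * aeval ζ w) := by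
  intro f
  induction f with
  | zero =>
    intro μ F G hμ hFG
    exact ⟨0, 0, rfl, ⟨F, by simp⟩, ⟨G, by simp⟩⟩
  | succ f ih =>
    intro μ F G hμ hFG
    have hqne : (q : ℂ) ≠ 0 := Nat.cast_ne_zero.2 hq.pos.ne'
    have hdvd : ∃ w : ℤ[X], aeval ζ F * aeval ζ G = (q : ℂ) * aeval ζ w := by
      refine ⟨(C (q : ℤ)) ^ f * C μ, ?_⟩
      rw [hFG, map_mul, map_pow, aeval_C, aeval_C]
      simp only [algebraMap_int_eq, eq_intCast]
      push_cast; ring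
    rcases JL_prime_step hζ hn hq hirr F G hdvd with ⟨F', hF'⟩ | ⟨G', hG'⟩
    · have h2 : aeval ζ F' * aeval ζ G = (q : ℂ) ^ f * (μ : ℂ) := by
        have : (q : ℂ) * (aeval ζ F' * aeval ζ G) = (q : ℂ) * ((q : ℂ) ^ f * (μ : ℂ)) := by
          rw [← mul_assoc, ← hF', hFG]; ring
        exact mul_left_cancel₀ hqne this
      obtain ⟨a, b, hab, ⟨w1, hw1⟩, hG⟩ := ih μ F' G hμ h2
      exact ⟨a + 1, b, by omega, ⟨w1, by rw [hF', hw1]; ring⟩, hG⟩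
    · have h2 : aeval ζ F * aeval ζ G' = (q : ℂ) ^ f * (μ : ℂ) := by
        have : (q : ℂ) * (aeval ζ F * aeval ζ G') = (q : ℂ) * ((q : ℂ) ^ f * (μ : ℂ)) := by
          rw [show (q:ℂ) * (aeval ζ F * aeval ζ G') = aeval ζ F * ((q:ℂ) * aeval ζ G') by ring,
            ← hG', hFG]; ring
        exact mul_left_cancel₀ hqne this
      obtain ⟨a, b, hab, hF, ⟨w1, hw1⟩⟩ := ih μ F G' hμ h2
      exact ⟨a, b + 1, by omega, hF, ⟨w1, by rw [hG', hw1]; ring⟩⟩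

end NT
lemma JL_zero {p e' n q : ℕ} {ζ : ℂ} (hp : p.Prime) (he' : 0 < e') (hn : n = p ^ e')
    (hζ : IsPrimitiveRoot ζ n) (c V : ℕ)
    (hV : V < q ^ c) (b : ℕ → ℕ) (hb : ∀ i, b i ≤ V)
    (hdvd : ∃ w : ℤ[X], (∑ i ∈ Finset.range n, (b i : ℂ) * ζ ^ i) = (q : ℂ) ^ c * aeval ζ w) :
    (∑ i ∈ Finset.range n, (b i : ℂ) * ζ ^ i) = 0 := by
  set s := p ^ (e' - 1) with hs_def
  have hs : 0 < s := pow_pos hp.pos _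
  have hns : n = p * s := by
    rw [hn, hs_def, ← pow_succ']
    congr 1; omega
  have hnpos : 0 < n := by rw [hns]; exact Nat.mul_pos hp.pos hs
  have hsn : s < n := by
    rw [hns]
    calc s = 1 * s := (one_mul s).symm
    _ < p * s := (Nat.mul_lt_mul_right hs).2 hp.one_lt
  set Φ : ℤ[X] := cyclotomic n ℤ with hΦ_def
  have hΦmonic : Φ.Monic := cyclotomic.monic n ℤ
  have hΦne : Φ ≠ 0 := hΦmonic.ne_zero
  have hΦ_eq : Φ = ∑ j ∈ Finset.range p, (X ^ s : ℤ[X]) ^ j := by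
    rw [hΦ_def, hn, show e' = (e' - 1) + 1 by omega]
    exact cyclotomic_prime_pow_eq_geom_sum hp
  have hΦdeg : Φ.natDegree = n - s := by
    rw [hΦ_def, natDegree_cyclotomic, hn, Nat.totient_prime_pow hp he']
    have h2 : p ^ e' = s * p := by rw [← hn, hns]; ring
    rw [h2, ← hs_def, Nat.mul_sub, mul_one]
  set F : ℤ[X] := ∑ i ∈ Finset.range n, monomial i ((b i : ℤ)) with hF_def
  have hFcoeff : ∀ t, F.coeff t = if t < n then (b t : ℤ) else 0 := by
    intro t
    rw [hF_def, finset_sum_coeff]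
    simp only [coeff_monomial]
    rw [Finset.sum_ite_eq' (Finset.range n) t]
    simp [Finset.mem_range]
  have hFa : aeval ζ F = ∑ i ∈ Finset.range n, (b i : ℂ) * ζ ^ i := by
    rw [hF_def, map_sum]
    apply Finset.sum_congr rfl
    intro i _
    rw [aeval_monomial]
    simp
  obtain ⟨w, hw⟩ := hdvd
  set W : ℤ[X] := w %ₘ Φ with hW_def
  have haW : aeval ζ W = aeval ζ w := by
    have hmd : W + Φ * (w /ₘ Φ) = w := modByMonic_add_div w Φ
    have := congrArg (aeval ζ) hmd
    rw [map_add, map_mul, JL_aeval_cyclo_zero hζ hnpos, zero_mul, add_zero] at this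
    exact this
  have hWdeg : W.natDegree < n - s := by
    rcases eq_or_ne W 0 with h0 | h0
    · rw [h0, natDegree_zero]
      omega
    · have hlt := degree_modByMonic_lt w hΦmonic
      rw [← hW_def] at hlt
      have := natDegree_lt_natDegree h0 hlt
      omega
  have h0 : aeval ζ (F - C ((q : ℤ) ^ c) * W) = 0 := by
    rw [map_sub, map_mul, aeval_C, hFa, hw, haW]
    simp only [algebraMap_int_eq, eq_intCast]
    push_cast
    ring
  obtain ⟨U, hU⟩ := (JL_aeval_eq_zero_iff hζ hnpos _).1 h0
  rcases eq_or_ne U 0 with hU0 | hU0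
  · -- F = C (q^c) * W, so all b i vanish
    rw [hU0, mul_zero, sub_eq_zero] at hU
    have hbz : ∀ i, i < n → b i = 0 := by
      intro i hi
      have hco := congrArg (fun P => Polynomial.coeff P i) hU
      simp only [coeff_C_mul] at hco
      rw [hFcoeff, if_pos hi] at hco
      have hdvd' : ((q : ℤ) ^ c) ∣ (b i : ℤ) := ⟨W.coeff i, hco⟩
      have hdvd'' : (q ^ c : ℕ) ∣ b i := by
        have : ((q ^ c : ℕ) : ℤ) ∣ ((b i : ℕ) : ℤ) := by push_cast; exact hdvd'
        exact_mod_cast this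
      exact Nat.eq_zero_of_dvd_of_lt hdvd'' (lt_of_le_of_lt (hb i) hV)
    apply Finset.sum_eq_zero
    intro i hi
    rw [hbz i (Finset.mem_range.1 hi)]
    simp
  · -- U ≠ 0 : degree analysis and coefficient congruences
    have hFdeg : F.natDegree < n := by
      rcases eq_or_ne F 0 with h0' | h0'
      · rw [h0', natDegree_zero]; exact hnpos
      · by_contra hge
        push_neg at hge
        have hlead := leadingCoeff_ne_zero.2 h0'
        rw [leadingCoeff, hFcoeff, if_neg (by omega)] at hlead
        exact hlead rfl
    have hUdeg : U.natDegree < s := by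
      have hmul : (Φ * U).natDegree = (n - s) + U.natDegree := by
        rw [natDegree_mul hΦne hU0, hΦdeg]
      have hrhs : (F - C ((q : ℤ) ^ c) * W).natDegree < n := by
        apply lt_of_le_of_lt (natDegree_sub_le _ _)
        apply max_lt hFdeg
        exact lt_of_le_of_lt (natDegree_C_mul_le _ _) (by omega)
      rw [hU, hmul] at hrhs
      omega
    have hcoeffPhiU : ∀ i < s, ∀ j < p, (Φ * U).coeff (j * s + i) = U.coeff i := by
      intro i hi j hj
      rw [hΦ_eq, Finset.sum_mul]
      rw [finset_sum_coeff]
      have hterm : ∀ j' ∈ Finset.range p, ((X ^ s : ℤ[X]) ^ j' * U).coeff (j * s + i)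
          = if j' = j then U.coeff i else 0 := by
        intro j' _
        rw [← pow_mul, mul_comm ((X : ℤ[X]) ^ (s * j')) U, coeff_mul_X_pow']
        rcases lt_trichotomy j' j with hlt | heq | hgt
        · have h1 : s * (j' + 1) ≤ s * j := Nat.mul_le_mul_left s (by omega)
          have h1' : s * (j' + 1) = s * j' + s := by ring
          have hcond : s * j' ≤ j * s + i := by rw [mul_comm j s]; omega
          rw [if_pos hcond, if_neg (by omega)]
          apply coeff_eq_zero_of_natDegree_lt
          have : s ≤ j * s + i - s * j' := by rw [mul_comm j s]; omega
          omega
        · rw [heq, if_pos (by rw [mul_comm j s]; omega), if_pos rfl]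
          congr 1
          rw [mul_comm j s]; omega
        · have h1 : s * (j + 1) ≤ s * j' := Nat.mul_le_mul_left s (by omega)
          have h1' : s * (j + 1) = s * j + s := by ring
          rw [if_neg (by rw [mul_comm j s]; omega), if_neg (by omega)]
      rw [Finset.sum_congr rfl hterm, Finset.sum_ite_eq' (Finset.range p) j,
        if_pos (Finset.mem_range.2 hj)]
    have hidxlt : ∀ i < s, ∀ j < p, j * s + i < n := by
      intro i hi j hj
      have h1 : (j + 1) * s ≤ p * s := Nat.mul_le_mul_right s (by omega)
      have h2 : (j + 1) * s = j * s + s := by ring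
      omega
    have hUco : ∀ i < s, ∀ j < p,
        (b (j * s + i) : ℤ) - (q : ℤ) ^ c * W.coeff (j * s + i) = U.coeff i := by
      intro i hi j hj
      have hco := congrArg (fun P => Polynomial.coeff P (j * s + i)) hU
      simp only [coeff_sub, coeff_C_mul] at hco
      rw [hFcoeff, if_pos (hidxlt i hi j hj)] at hco
      rw [hco, hcoeffPhiU i hi j hj]
    have hbc : ∀ i < s, ∀ j < p, b (j * s + i) = b i := by
      intro i hi j hj
      have e1 := hUco i hi j hj
      have e2 := hUco i hi 0 hp.pos
      simp only [Nat.zero_mul, Nat.zero_add] at e2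
      have hQ : ((q ^ c : ℕ) : ℤ) = (q : ℤ) ^ c := by push_cast; ring
      have hdiff : ((q ^ c : ℕ) : ℤ) ∣ ((b (j * s + i) : ℤ) - (b i : ℤ)) := by
        rw [hQ]
        refine ⟨W.coeff (j * s + i) - W.coeff i, ?_⟩
        linear_combination e1 - e2
      have habs : |(b (j * s + i) : ℤ) - (b i : ℤ)| < ((q ^ c : ℕ) : ℤ) := by
        have h1 := hb (j * s + i); have h2 := hb i
        rw [abs_sub_lt_iff]
        constructor <;> [skip; skip] <;>
          · have : (b (j * s + i) : ℤ) ≤ (V : ℤ) := by exact_mod_cast h1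
            have : (b i : ℤ) ≤ (V : ℤ) := by exact_mod_cast h2
            have : ((V : ℕ) : ℤ) < ((q ^ c : ℕ) : ℤ) := by exact_mod_cast hV
            omega
      have := Int.eq_zero_of_abs_lt_dvd hdiff habs
      omega
    have hζs : IsPrimitiveRoot (ζ ^ s) p := hζ.pow hnpos (by rw [hns, mul_comm])
    have hgeom : ∑ j ∈ Finset.range p, (ζ ^ s) ^ j = 0 := hζs.geom_sum_eq_zero hp.one_lt
    have hsplit : (∑ t ∈ Finset.range n, (b t : ℂ) * ζ ^ t)
        = ∑ ji ∈ Finset.range p ×ˢ Finset.range s,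
            (b (ji.1 * s + ji.2) : ℂ) * ζ ^ (ji.1 * s + ji.2) := by
      refine Finset.sum_nbij' (fun t => (t / s, t % s)) (fun ji => ji.1 * s + ji.2)
        ?_ ?_ ?_ ?_ ?_
      · intro t ht
        rw [Finset.mem_range] at ht
        rw [Finset.mem_product, Finset.mem_range, Finset.mem_range]
        refine ⟨(Nat.div_lt_iff_lt_mul hs).2 (by omega), Nat.mod_lt _ hs⟩
      · intro ji hji
        rw [Finset.mem_product, Finset.mem_range, Finset.mem_range] at hji
        rw [Finset.mem_range]
        exact hidxlt ji.2 hji.2 ji.1 hji.1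
      · intro t _
        simp only
        rw [mul_comm (t / s) s]
        exact Nat.div_add_mod t s
      · intro ji hji
        rw [Finset.mem_product, Finset.mem_range, Finset.mem_range] at hji
        have h1 : (ji.1 * s + ji.2) / s = ji.1 := by
          rw [add_comm, Nat.add_mul_div_right _ _ hs, Nat.div_eq_of_lt hji.2, Nat.zero_add]
        have h2 : (ji.1 * s + ji.2) % s = ji.2 := by
          rw [add_comm, Nat.add_mul_mod_self_right, Nat.mod_eq_of_lt hji.2]
        ext <;> simp [h1, h2]
      · intro t _
        simp only
        rw [mul_comm (t / s) s, Nat.div_add_mod t s]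
    rw [hsplit, Finset.sum_product]
    dsimp only
    rw [Finset.sum_comm]
    apply Finset.sum_eq_zero
    intro i hi
    rw [Finset.mem_range] at hi
    have hterm : ∀ j ∈ Finset.range p,
        (b (j * s + i) : ℂ) * ζ ^ (j * s + i) = ((b i : ℂ) * ζ ^ i) * (ζ ^ s) ^ j := by
      intro j hj
      rw [Finset.mem_range] at hj
      rw [hbc i hi j hj, pow_add, ← pow_mul, mul_comm j s, pow_mul]
      ring
    rw [Finset.sum_congr rfl hterm, ← Finset.mul_sum, hgeom, mul_zero]



open Complex in
lemma JL_cases {m : ℕ} (hm : 0 < m) (A : Fin m → ℂ) (lam : ℝ) (hlam : 0 < lam)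
    (hS : ∀ j, ((∑ l, A l) - A j) * (starRingEnd ℂ) (A j) = -(lam : ℂ)) :
    ∃ i j, A i * (starRingEnd ℂ) (A j) = (lam : ℂ) ∨
      A i * (starRingEnd ℂ) (A j) = -(lam : ℂ) := by
  set S := ∑ l, A l with hS_def
  by_cases hS0 : S = 0
  · refine ⟨⟨0, hm⟩, ⟨0, hm⟩, Or.inl ?_⟩
    have h1 := hS ⟨0, hm⟩
    rw [hS0] at h1
    linear_combination -h1
  · have key1 : ∀ j, S * (starRingEnd ℂ) (A j) = ((normSq (A j) - lam : ℝ) : ℂ) := by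
      intro j
      have h1 := hS j
      push_cast
      rw [sub_mul, Complex.mul_conj] at h1
      linear_combination h1
    set t : ℝ := normSq S with ht_def
    have ht : 0 < t := normSq_pos.2 hS0
    have key2 : ∀ j, t * normSq (A j) = (normSq (A j) - lam) ^ 2 := by
      intro j
      have h1 := congrArg normSq (key1 j)
      rw [map_mul, normSq_conj, normSq_ofReal] at h1
      rw [h1]; ring
    by_cases hall : ∀ i j, normSq (A i) = normSq (A j)
    · exfalso
      set x := normSq (A ⟨0, hm⟩) with hx_def
      have hx0 : 0 ≤ x := normSq_nonneg _
      have hsum : ∀ j, S * (starRingEnd ℂ) (A j) = ((x - lam : ℝ) : ℂ) := by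
        intro j
        rw [key1 j]
        have hj := hall j ⟨0, hm⟩
        rw [hj]
      -- sum over j of key1 gives m * (x - lam) = t
      have e1 : (m : ℝ) * (x - lam) = t := by
        have h2 : S * (starRingEnd ℂ) S = ((t : ℝ) : ℂ) := Complex.mul_conj S
        have h3 : ∑ j, S * (starRingEnd ℂ) (A j) = ((t : ℝ) : ℂ) := by
          rw [← Finset.mul_sum, ← map_sum, ← hS_def, h2]
        rw [Finset.sum_congr rfl (fun j _ => hsum j), Finset.sum_const,
          Finset.card_univ, Fintype.card_fin] at h3
        have h4 : (((m : ℝ) * (x - lam) : ℝ) : ℂ) = ((t : ℝ) : ℂ) := by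
          push_cast at h3 ⊢
          simpa using h3
        exact_mod_cast h4
      have e2 : t * x = (x - lam) ^ 2 := key2 ⟨0, hm⟩
      have e4 : x * (m : ℝ) ^ 2 = t := by
        have h5 : ((m : ℝ) * (x - lam)) ^ 2 = t ^ 2 := by rw [e1]
        have e3 : (m : ℝ) ^ 2 * (t * x) = t ^ 2 := by linear_combination (m:ℝ)^2 * e2 + h5
        have := mul_left_cancel₀ ht.ne' (show t * (x * (m:ℝ)^2) = t * t by linear_combination e3)
        linarith [this]
      have hm1 : (1 : ℝ) ≤ (m : ℝ) := by exact_mod_cast hm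
      have e5 : (m : ℝ) * lam = (m : ℝ) * x * (1 - (m : ℝ)) := by linear_combination -e1 + e4
      nlinarith [mul_pos (show (0:ℝ) < m by linarith) hlam, mul_nonneg (mul_nonneg (le_of_lt (show (0:ℝ) < m by linarith)) hx0) (show (0:ℝ) ≤ (m:ℝ) - 1 by linarith)]
    · push_neg at hall
      obtain ⟨j, j', hne⟩ := hall
      set x := normSq (A j) with hx_def
      set y := normSq (A j') with hy_def
      have e2j : t * x = (x - lam) ^ 2 := key2 j
      have e2j' : t * y = (y - lam) ^ 2 := key2 j'
      have hsum : x + y = t + 2 * lam := by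
        have h1 : (x - y) * (x + y - 2 * lam) = (x - y) * t := by
          linear_combination e2j' - e2j
        have := mul_left_cancel₀ (sub_ne_zero.2 hne) h1
        linarith
      set P : ℝ := (x - lam) * (y - lam) with hP_def
      have hP2 : P ^ 2 = t ^ 2 * (x * y) := by
        linear_combination -(t * y) * e2j - (x - lam) ^ 2 * e2j'
      have hxy2 : x * y = P + lam * t + lam ^ 2 := by
        linear_combination lam * hsum
      have hquad : (P + lam * t) * (P - t ^ 2 - lam * t) = 0 := by
        linear_combination hP2 + t ^ 2 * hxy2
      rcases mul_eq_zero.1 hquad with hPeq | hPeq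
      · -- P = -lam * t  : the pair works
        have hPval : P = -(lam * t) := by linarith
        refine ⟨j', j, Or.inr ?_⟩
        have hprod : ((t : ℝ) : ℂ) * (A j' * (starRingEnd ℂ) (A j)) =
            ((y - lam : ℝ) : ℂ) * ((x - lam : ℝ) : ℂ) := by
          have h1 : (starRingEnd ℂ) S * A j' = ((y - lam : ℝ) : ℂ) := by
            have hcj := congrArg (starRingEnd ℂ) (key1 j')
            rwa [map_mul, Complex.conj_conj, Complex.conj_ofReal] at hcj
          have h2 := key1 j
          have hts : ((t : ℝ) : ℂ) = S * (starRingEnd ℂ) S := by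
            rw [ht_def]; exact (Complex.mul_conj S).symm
          calc ((t : ℝ) : ℂ) * (A j' * (starRingEnd ℂ) (A j))
              = ((starRingEnd ℂ) S * A j') * (S * (starRingEnd ℂ) (A j)) := by
                rw [hts]; ring
            _ = ((y - lam : ℝ) : ℂ) * ((x - lam : ℝ) : ℂ) := by rw [h1, h2]
        have htne : ((t : ℝ) : ℂ) ≠ 0 := by
          simpa using Complex.ofReal_ne_zero.2 ht.ne'
        apply mul_left_cancel₀ htne
        rw [hprod]
        push_cast
        rw [show ((y:ℂ) - (lam:ℂ)) * ((x:ℂ) - (lam:ℂ)) = ((P : ℝ) : ℂ) by push_cast [hP_def]; ring]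
        rw [hPval]
        push_cast
        ring
      · -- P = t^2 + lam*t : impossible
        exfalso
        have hPval : P = t ^ 2 + lam * t := by linarith
        have hsq : (x - y) ^ 2 = -(3 * t ^ 2) - 4 * lam * t := by
          linear_combination (x + y + t + 2 * lam) * hsum - 4 * hxy2 - 4 * hPval
        nlinarith [sq_nonneg (x - y), mul_pos hlam ht, sq_nonneg t, ht]

lemma JL_exists_surj {G : Type*} [CommGroup G] [Fintype G] {pp k : ℕ} (hp : pp.Prime)
    (hk : 0 < k) (g₀ : G) (hg : orderOf g₀ = pp ^ k) :
    ∃ ψ : G → ZMod (pp ^ k), Function.Surjective ψ ∧ ∀ a b : G, ψ (a * b) = ψ a + ψ b := by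
  obtain ⟨ι, hfin, nf, hgt1, ⟨eqv⟩⟩ := AddCommGroup.equiv_directSum_zmod_of_finite' (Additive G)
  haveI : Fintype ι := hfin
  haveI : DecidableEq ι := Classical.decEq ι
  haveI : NeZero (pp ^ k) := ⟨pow_ne_zero k hp.pos.ne'⟩
  haveI : ∀ i, NeZero (nf i) := fun i => ⟨by have := hgt1 i; omega⟩
  set x := eqv (Additive.ofMul g₀) with hx_def
  have hxord : addOrderOf x = pp ^ k := by
    have h1 := addOrderOf_injective eqv.toAddMonoidHom eqv.injective (Additive.ofMul g₀)
    rw [hx_def]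
    rw [show eqv (Additive.ofMul g₀) = eqv.toAddMonoidHom (Additive.ofMul g₀) from rfl, h1,
      addOrderOf_ofMul_eq_orderOf, hg]
  have hxne : pp ^ (k - 1) • x ≠ 0 := by
    intro h0
    have := addOrderOf_dvd_iff_nsmul_eq_zero.2 h0
    rw [hxord] at this
    have hle := Nat.le_of_dvd (pow_pos hp.pos _) this
    have hlt := Nat.pow_lt_pow_right hp.one_lt (show k - 1 < k by omega)
    omega
  obtain ⟨i, hi⟩ : ∃ i, pp ^ (k - 1) • (x i) ≠ 0 := by
    by_contra hall
    push_neg at hall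
    apply hxne
    apply DFinsupp.ext
    intro i
    show (DFinsupp.evalAddMonoidHom i) (pp ^ (k - 1) • x) = _
    rw [AddMonoidHom.map_nsmul]
    exact hall i
  have hordi : addOrderOf (x i) = pp ^ k := by
    have h1 : addOrderOf (x i) ∣ pp ^ k := by
      rw [addOrderOf_dvd_iff_nsmul_eq_zero]
      have hz : pp ^ k • x = 0 := by
        rw [← hxord]; exact addOrderOf_nsmul_eq_zero x
      have h2 := congrArg (DFinsupp.evalAddMonoidHom i) hz
      rw [AddMonoidHom.map_nsmul, map_zero] at h2
      exact h2
    obtain ⟨j, hj, hjeq⟩ := (Nat.dvd_prime_pow hp).1 h1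
    have hjk : j = k := by
      by_contra hne
      apply hi
      have hdd : addOrderOf (x i) ∣ pp ^ (k - 1) := by
        rw [hjeq]; exact pow_dvd_pow pp (by omega)
      exact addOrderOf_dvd_iff_nsmul_eq_zero.1 hdd
    rw [hjeq, hjk]
  have hdvd : pp ^ k ∣ nf i := by
    have h1 : addOrderOf (x i) ∣ Fintype.card (ZMod (nf i)) := addOrderOf_dvd_card
    rwa [hordi, ZMod.card] at h1
  -- build the surjection
  set φ1 : (DirectSum ι fun j => ZMod (nf j)) →+ ZMod (nf i) := DFinsupp.evalAddMonoidHom i with hφ1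
  set φ2 : ZMod (nf i) →+ ZMod (pp ^ k) := (ZMod.castHom hdvd (ZMod (pp ^ k))).toAddMonoidHom
  have hφ1surj : Function.Surjective φ1 := by
    intro z
    refine ⟨DirectSum.of (fun j => ZMod (nf j)) i z, ?_⟩
    exact DirectSum.of_eq_same (β := fun j => ZMod (nf j)) i z
  have hφ2surj : Function.Surjective φ2 := by
    intro z
    refine ⟨((z.val : ℕ) : ZMod (nf i)), ?_⟩
    show (ZMod.castHom hdvd (ZMod (pp ^ k))) ((z.val : ℕ) : ZMod (nf i)) = z
    rw [map_natCast, ZMod.natCast_val, ZMod.cast_id]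
  refine ⟨fun g => φ2 (φ1 (eqv (Additive.ofMul g))), ?_, ?_⟩
  · exact hφ2surj.comp (hφ1surj.comp (eqv.surjective.comp (fun a => ⟨a, rfl⟩)))
  · intro a b
    show φ2 (φ1 (eqv (Additive.ofMul (a * b)))) = _
    rw [show Additive.ofMul (a * b) = Additive.ofMul a + Additive.ofMul b from rfl,
      map_add, map_add, map_add]

lemma JL_primroot_transfer {p e e' q : ℕ} (hp : p.Prime) (he' : 0 < e') (hee : e' ≤ e)
    (hprim : orderOf (q : ZMod (p ^ e)) = (p ^ e).totient) :
    orderOf (q : ZMod (p ^ e')) = (p ^ e').totient := by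
  haveI : NeZero (p ^ e) := ⟨pow_ne_zero e hp.pos.ne'⟩
  haveI : NeZero (p ^ e') := ⟨pow_ne_zero e' hp.pos.ne'⟩
  haveI : Fact p.Prime := ⟨hp⟩
  have htotpos : 0 < (p ^ e).totient := Nat.totient_pos.2 (pow_pos hp.pos e)
  have hu : IsUnit (q : ZMod (p ^ e)) := by
    apply IsUnit.of_pow_eq_one (n := (p ^ e).totient)
    · rw [← hprim]; exact pow_orderOf_eq_one _
    · exact htotpos.ne'
  have huord : orderOf hu.unit = (p ^ e).totient := by
    rw [← orderOf_units, IsUnit.unit_spec, hprim]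
  have htop : ∀ w : (ZMod (p ^ e))ˣ, w ∈ Subgroup.zpowers hu.unit := by
    have hcard : Nat.card (Subgroup.zpowers hu.unit) = Nat.card (ZMod (p ^ e))ˣ := by
      rw [Nat.card_zpowers, huord, Nat.card_eq_fintype_card, ZMod.card_units_eq_totient]
    have := Subgroup.eq_top_of_card_eq _ hcard
    intro w; rw [this]; trivial
  set u' := ZMod.unitsMap (pow_dvd_pow p hee) hu.unit with hu'
  have hsurj := ZMod.unitsMap_surjective (pow_dvd_pow p hee) (n := p ^ e')
  have hmem : ∀ w : (ZMod (p ^ e'))ˣ, w ∈ Subgroup.zpowers u' := by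
    intro w
    obtain ⟨z, hz⟩ := hsurj w
    obtain ⟨kk, hkk⟩ := htop z
    refine ⟨kk, ?_⟩
    rw [← hz, ← hkk, hu']
    exact (map_zpow (ZMod.unitsMap (pow_dvd_pow p hee)) hu.unit kk).symm
  have hord' : orderOf u' = (p ^ e').totient := by
    rw [orderOf_eq_card_of_forall_mem_zpowers hmem, Nat.card_eq_fintype_card,
      ZMod.card_units_eq_totient]
  have hcoe : (u' : ZMod (p ^ e')) = (q : ZMod (p ^ e')) := by
    rw [hu', ZMod.unitsMap_def]
    show (ZMod.castHom (pow_dvd_pow p hee) (ZMod (p ^ e'))) (hu.unit : ZMod (p ^ e)) = _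
    rw [IsUnit.unit_spec]
    exact map_natCast (ZMod.castHom (pow_dvd_pow p hee) (ZMod (p ^ e'))) q
  rw [← hcoe, orderOf_units, hord']

lemma JL_star {G : Type*} [CommGroup G] [Fintype G] [DecidableEq G]
    {m : ℕ} (D : Fin m → Finset G) (lam : ℕ) (χ : G → ℂ)
    (hχmul : ∀ a b : G, χ (a * b) = χ a * χ b)
    (hχ1 : χ 1 = 1) (hsum0 : ∑ g : G, χ g = 0)
    (j : Fin m)
    (hdiff : ∀ g : G,
      (∑ l ∈ Finset.univ.filter (fun l => l ≠ j),
        (((D l) ×ˢ (D j)).filter (fun x => x.1 * x.2⁻¹ = g)).card)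
      = if g = 1 then 0 else lam) :
    ((∑ l, ∑ x ∈ D l, χ x) - ∑ x ∈ D j, χ x) * (∑ y ∈ D j, χ y⁻¹) = -(lam : ℂ) := by
  classical
  calc ((∑ l, ∑ x ∈ D l, χ x) - ∑ x ∈ D j, χ x) * (∑ y ∈ D j, χ y⁻¹)
      = ∑ l ∈ Finset.univ.filter (fun l => l ≠ j),
          ((∑ x ∈ D l, χ x) * (∑ y ∈ D j, χ y⁻¹)) := by
        rw [← Finset.sum_mul]
        congr 1
        rw [Finset.filter_ne', Finset.sum_erase_eq_sub (Finset.mem_univ j)]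
    _ = ∑ l ∈ Finset.univ.filter (fun l => l ≠ j),
          ∑ pr ∈ (D l) ×ˢ (D j), χ (pr.1 * pr.2⁻¹) := by
        refine Finset.sum_congr rfl fun l _ => ?_
        rw [Finset.sum_mul_sum]
        rw [Finset.sum_product]
        exact Finset.sum_congr rfl fun x _ => Finset.sum_congr rfl fun y _ =>
          (hχmul x y⁻¹).symm
    _ = ∑ l ∈ Finset.univ.filter (fun l => l ≠ j), ∑ g : G,
          ∑ pr ∈ ((D l) ×ˢ (D j)).filter (fun pr => pr.1 * pr.2⁻¹ = g), χ (pr.1 * pr.2⁻¹) := by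
        refine Finset.sum_congr rfl fun l _ => ?_
        exact (Finset.sum_fiberwise_of_maps_to (fun pr _ => Finset.mem_univ _) _).symm
    _ = ∑ g : G, ∑ l ∈ Finset.univ.filter (fun l => l ≠ j),
          ((((D l) ×ˢ (D j)).filter (fun pr => pr.1 * pr.2⁻¹ = g)).card : ℂ) * χ g := by
        rw [Finset.sum_comm]
        refine Finset.sum_congr rfl fun g _ => Finset.sum_congr rfl fun l _ => ?_
        have hconst : (∑ pr ∈ ((D l) ×ˢ (D j)).filter (fun pr => pr.1 * pr.2⁻¹ = g),
            χ (pr.1 * pr.2⁻¹))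
            = ((((D l) ×ˢ (D j)).filter (fun pr => pr.1 * pr.2⁻¹ = g)).card) • χ g := by
          rw [← Finset.sum_const]
          refine Finset.sum_congr rfl fun pr hpr => ?_
          rw [(Finset.mem_filter.1 hpr).2]
        rw [hconst, nsmul_eq_mul]
    _ = ∑ g : G, ((if g = (1:G) then (0:ℕ) else lam : ℕ) : ℂ) * χ g := by
        refine Finset.sum_congr rfl fun g _ => ?_
        rw [← Finset.sum_mul, ← Nat.cast_sum, hdiff g]
    _ = -(lam : ℂ) := by
        have hsimp : ∀ g : G, ((if g = (1:G) then (0:ℕ) else lam : ℕ) : ℂ) * χ g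
            = (lam : ℂ) * χ g - (if g = (1:G) then (lam : ℂ) * χ g else 0) := by
          intro g
          by_cases hg : g = 1 <;> simp [hg]
        rw [Finset.sum_congr rfl fun g _ => hsimp g, Finset.sum_sub_distrib,
          ← Finset.mul_sum, hsum0, mul_zero, Finset.sum_ite_eq' Finset.univ (1 : G),
          if_pos (Finset.mem_univ _), hχ1, mul_one, zero_sub]
open Polynomial in
lemma JL_rep {G : Type*} [Fintype G] [DecidableEq G] {N : ℕ} [NeZero N] (ζ : ℂ)
    (E : Finset G) (θ : G → ZMod N) :
    ∑ x ∈ E, ζ ^ (θ x).val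
      = ∑ t ∈ Finset.range N, ((E.filter (fun x => (θ x).val = t)).card : ℂ) * ζ ^ t := by
  rw [← Finset.sum_fiberwise_of_maps_to (g := fun x => (θ x).val)
    (fun x _ => Finset.mem_range.2 (ZMod.val_lt _)) (fun x => ζ ^ (θ x).val)]
  refine Finset.sum_congr rfl fun t _ => ?_
  have hcongr : ∀ x ∈ E.filter (fun x => (θ x).val = t), ζ ^ (θ x).val = ζ ^ t := fun x hx => by
    rw [(Finset.mem_filter.1 hx).2]
  rw [Finset.sum_congr rfl hcongr, Finset.sum_const, nsmul_eq_mul]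

lemma JL_rep_bound {G : Type*} [Fintype G] [DecidableEq G] {N : ℕ} [NeZero N]
    (E : Finset G) (θ : G → ZMod N) (V : ℕ)
    (hV : ∀ t : ZMod N, (Finset.univ.filter (fun x => θ x = t)).card = V) (t : ℕ) :
    (E.filter (fun x => (θ x).val = t)).card ≤ V := by
  calc (E.filter (fun x => (θ x).val = t)).card
      ≤ (Finset.univ.filter (fun x => θ x = ((t : ℕ) : ZMod N))).card := by
        apply Finset.card_le_card
        intro x hx
        rw [Finset.mem_filter] at hx ⊢
        refine ⟨Finset.mem_univ _, ?_⟩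
        rw [← hx.2, ZMod.natCast_val, ZMod.cast_id]
    _ = V := hV _

open Polynomial in
lemma JL_aeval_of_b (ζ : ℂ) (N : ℕ) (b : ℕ → ℕ) :
    aeval ζ (∑ t ∈ Finset.range N, monomial t ((b t : ℤ)))
      = ∑ t ∈ Finset.range N, (b t : ℂ) * ζ ^ t := by
  rw [map_sum]
  refine Finset.sum_congr rfl fun t _ => ?_
  rw [aeval_monomial]
  simp

/-- Jedwab–Li exponent bound: if there is a `(v,m,k,λ)`-SEDF in `G` with `m ≥ 3`,
`p^e ∥ v`, `q^f ∥ λ` with `e, f ≥ 1`, and `q` is a primitive root modulo `p^e`,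
then the exponent of the Sylow `p`-subgroup of `G` is at most `v / q^{⌈f/2⌉}`. -/
theorem sedf_sylow_exponent_bound {G : Type*} [CommGroup G] [Fintype G] [DecidableEq G]
    {v m k lam : ℕ} (hv : Fintype.card G = v)
    (D : Fin m → Finset G) (h : IsSEDF D k lam) (hm : 3 ≤ m)
    (p q e f : ℕ) (hp : p.Prime) (hq : q.Prime) (he : 0 < e) (hf : 0 < f)
    (hpe : p ^ e ∣ v ∧ ¬ p ^ (e + 1) ∣ v)
    (hqf : q ^ f ∣ lam ∧ ¬ q ^ (f + 1) ∣ lam)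
    (hprim : orderOf (q : ZMod (p ^ e)) = (p ^ e).totient)
    (P : Sylow p G) :
    (Monoid.exponent ↥(P : Subgroup G) : ℝ) ≤ (v : ℝ) / q ^ ((f + 1) / 2) := by
  classical
  obtain ⟨hm0, hk0, hlam0, hcard, hdisj, hdiff⟩ := h
  haveI : Fact p.Prime := ⟨hp⟩
  have hvpos : 0 < v := hv ▸ Fintype.card_pos
  set c := (f + 1) / 2 with hc_def
  -- the Sylow subgroup has order p ^ e
  have hcardP : Nat.card ↥(P : Subgroup G) = p ^ e := by
    rw [Sylow.card_eq_multiplicity]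
    congr 1
    rw [Nat.card_eq_fintype_card, hv]
    have h1 : e ≤ v.factorization p :=
      (Nat.Prime.pow_dvd_iff_le_factorization hp hvpos.ne').1 hpe.1
    have h2 : ¬ (e + 1 ≤ v.factorization p) := fun hh =>
      hpe.2 ((Nat.Prime.pow_dvd_iff_le_factorization hp hvpos.ne').2 hh)
    omega
  -- the exponent is p ^ e' for some 1 ≤ e' ≤ e
  have hexp_dvd : Monoid.exponent ↥(P : Subgroup G) ∣ p ^ e := by
    rw [← hcardP, Nat.card_eq_fintype_card]
    exact Group.exponent_dvd_card
  obtain ⟨e', hle, hne'⟩ := (Nat.dvd_prime_pow hp).1 hexp_dvd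
  have hpP : p ∣ Fintype.card ↥(P : Subgroup G) := by
    rw [← Nat.card_eq_fintype_card, hcardP]
    exact dvd_pow_self p he.ne'
  obtain ⟨xP, hxP⟩ := exists_prime_orderOf_dvd_card p hpP
  have hpn : p ∣ p ^ e' := by
    have hh := Monoid.order_dvd_exponent xP
    rw [hxP, hne'] at hh
    exact hh
  have he'pos : 0 < e' := by
    by_contra h0
    push_neg at h0
    interval_cases e'
    rw [pow_zero] at hpn
    exact hp.one_lt.ne' (Nat.eq_one_of_dvd_one hpn)
  set N := p ^ e' with hN_def
  have hNpos : 0 < N := pow_pos hp.pos e'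
  have hN2 : 2 ≤ N := by
    calc 2 ≤ p := hp.two_le
    _ = p ^ 1 := (pow_one p).symm
    _ ≤ p ^ e' := Nat.pow_le_pow_right hp.pos he'pos
  haveI : NeZero N := ⟨hNpos.ne'⟩
  haveI : Fact (1 < N) := ⟨by omega⟩
  -- an element of G of order N
  obtain ⟨gP, hgP⟩ := Monoid.exists_orderOf_eq_exponent
    (Monoid.ExponentExists.of_finite (G := ↥(P : Subgroup G)))
  have hgG : orderOf ((gP : G)) = N := by
    rw [Subgroup.orderOf_coe, hgP, hne']
  -- a surjective additive character base ψ
  obtain ⟨ψ, hψsurj, hψadd⟩ := JL_exists_surj hp he'pos (gP : G) hgG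
  have hψ1 : ψ 1 = 0 := by
    have h1 := hψadd 1 1
    rw [one_mul] at h1
    exact left_eq_add.1 h1
  have hψinv : ∀ a : G, ψ a⁻¹ = - ψ a := by
    intro a
    have h1 := hψadd a a⁻¹
    rw [mul_inv_cancel, hψ1] at h1
    linear_combination -h1
  -- the complex character
  set ζ : ℂ := Complex.exp (2 * Real.pi * Complex.I / N) with hζ_def
  have hζ : IsPrimitiveRoot ζ N := Complex.isPrimitiveRoot_exp N hNpos.ne'
  have hζN : ζ ^ N = 1 := hζ.pow_eq_one
  set χ : G → ℂ := fun g => ζ ^ (ψ g).val with hχ_def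
  have hχmul : ∀ a b : G, χ (a * b) = χ a * χ b := by
    intro a b
    show ζ ^ (ψ (a * b)).val = ζ ^ (ψ a).val * ζ ^ (ψ b).val
    rw [hψadd a b, ZMod.val_add, ← pow_eq_pow_mod _ hζN, pow_add]
  have hχ1 : χ 1 = 1 := by
    show ζ ^ (ψ 1).val = 1
    rw [hψ1, ZMod.val_zero, pow_zero]
  have hζabs : ‖ζ‖ = 1 := Complex.norm_eq_one_of_pow_eq_one hζN hNpos.ne'
  have hζmulconj : ζ * (starRingEnd ℂ) ζ = 1 := by
    rw [Complex.mul_conj, Complex.normSq_eq_norm_sq, hζabs]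
    norm_num
  have hχne : ∀ a : G, χ a ≠ 0 := by
    intro a
    apply pow_ne_zero
    intro h0
    rw [h0] at hζabs
    simp at hζabs
  have hχconj : ∀ a : G, (starRingEnd ℂ) (χ a) = χ a⁻¹ := by
    intro a
    have h1 : χ a * (starRingEnd ℂ) (χ a) = 1 := by
      show ζ ^ (ψ a).val * (starRingEnd ℂ) (ζ ^ (ψ a).val) = 1
      rw [map_pow, ← mul_pow, hζmulconj, one_pow]
    have h2 : χ a * χ a⁻¹ = 1 := by
      rw [← hχmul, mul_inv_cancel, hχ1]
    exact mul_left_cancel₀ (hχne a) (h1.trans h2.symm)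
  -- sum of χ over G is zero
  have hsum0 : ∑ g : G, χ g = 0 := by
    obtain ⟨g1, hg1⟩ := hψsurj 1
    have hχg1 : χ g1 = ζ := by
      show ζ ^ (ψ g1).val = ζ
      rw [hg1, ZMod.val_one, pow_one]
    have hstep : χ g1 * ∑ g : G, χ g = ∑ g : G, χ g := by
      rw [Finset.mul_sum]
      exact Fintype.sum_bijective (fun g => g1 * g) (Group.mulLeft_bijective g1)
        _ _ (fun x => (hχmul g1 x).symm)
    have hζne1 : ζ ≠ 1 := hζ.ne_one hN2
    have : (χ g1 - 1) * ∑ g : G, χ g = 0 := by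
      rw [sub_mul, one_mul, hstep, sub_self]
    rcases mul_eq_zero.1 this with h0 | h0
    · exact absurd (by rwa [hχg1, sub_eq_zero] at h0) hζne1
    · exact h0
  -- fibers of ψ all have the same size V, with v = N * V
  set V := (Finset.univ.filter (fun x : G => ψ x = 0)).card with hV_def
  have hfib : ∀ t : ZMod N, (Finset.univ.filter (fun x : G => ψ x = t)).card = V := by
    intro t
    obtain ⟨gt, hgt⟩ := hψsurj t
    rw [hV_def]
    apply Finset.card_bij' (fun x _ => gt⁻¹ * x) (fun y _ => gt * y)
    · intro x hx
      rw [Finset.mem_filter] at hx ⊢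
      refine ⟨Finset.mem_univ _, ?_⟩
      rw [hψadd, hψinv, hgt, hx.2]
      ring
    · intro y hy
      rw [Finset.mem_filter] at hy ⊢
      refine ⟨Finset.mem_univ _, ?_⟩
      rw [hψadd, hgt, hy.2, add_zero]
    · intro x _; group
    · intro y _; group
  have hvNV : v = N * V := by
    rw [← hv, Finset.card_univ.symm.trans (Finset.card_eq_sum_card_fiberwise
      (f := ψ) (t := Finset.univ) (fun x _ => Finset.mem_univ _))]
    rw [Finset.sum_congr rfl (fun t _ => hfib t), Finset.sum_const, smul_eq_mul,
      Finset.card_univ, ZMod.card]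
  -- fibers of x ↦ ψ x⁻¹ also have size V
  have hfibinv : ∀ t : ZMod N, (Finset.univ.filter (fun x : G => ψ x⁻¹ = t)).card = V := by
    intro t
    rw [← hfib (-t)]
    congr 1
    apply Finset.filter_congr
    intro x _
    simp only [hψinv x, neg_eq_iff_eq_neg]
  -- main contradiction argument
  have hqR : (0 : ℝ) < (q : ℝ) := by exact_mod_cast hq.pos
  have hqcpos : 0 < (q : ℝ) ^ c := by positivity
  rw [show ((Monoid.exponent ↥(P : Subgroup G)) : ℝ) = (N : ℝ) by rw [hne'],
    le_div_iff₀ hqcpos]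
  by_contra hcon
  push_neg at hcon
  have hconN : v < N * q ^ c := by
    have h1 : (v : ℝ) < ((N * q ^ c : ℕ) : ℝ) := by push_cast; exact hcon
    exact_mod_cast h1
  have hVlt : V < q ^ c := by
    by_contra hge
    push_neg at hge
    have : N * q ^ c ≤ N * V := Nat.mul_le_mul_left N hge
    omega
  -- the character sums over the D's
  set A : Fin m → ℂ := fun l => ∑ x ∈ D l, χ x with hA_def
  have hB : ∀ j, (starRingEnd ℂ) (A j) = ∑ y ∈ D j, χ y⁻¹ := by
    intro j
    rw [hA_def, map_sum]
    exact Finset.sum_congr rfl fun y _ => hχconj y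
  have hAS : ∀ j, ((∑ l, A l) - A j) * (starRingEnd ℂ) (A j) = -((lam : ℝ) : ℂ) := by
    intro j
    rw [hB j]
    have hst := JL_star D lam χ hχmul hχ1 hsum0 j (hdiff j)
    rw [hA_def]
    rw [hst]
    norm_cast
  have hlamR : (0 : ℝ) < lam := by exact_mod_cast hlam0
  obtain ⟨i0, j0, hij⟩ := JL_cases hm0 A (lam : ℝ) hlamR hAS
  rw [hB j0] at hij
  -- polynomial representation of the two factors
  set bF : ℕ → ℕ := fun t => ((D i0).filter (fun x => (ψ x).val = t)).card with hbF
  set bG : ℕ → ℕ := fun t => ((D j0).filter (fun x => (ψ x⁻¹).val = t)).card with hbG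
  have hrepF : A i0 = ∑ t ∈ Finset.range N, (bF t : ℂ) * ζ ^ t := JL_rep ζ (D i0) ψ
  have hrepG : (∑ y ∈ D j0, χ y⁻¹) = ∑ t ∈ Finset.range N, (bG t : ℂ) * ζ ^ t :=
    JL_rep ζ (D j0) (fun y => ψ y⁻¹)
  have hbFle : ∀ t, bF t ≤ V := fun t => JL_rep_bound _ ψ V hfib t
  have hbGle : ∀ t, bG t ≤ V := fun t => JL_rep_bound _ (fun y => ψ y⁻¹) V hfibinv t
  set FF : Polynomial ℤ := ∑ t ∈ Finset.range N, Polynomial.monomial t ((bF t : ℤ)) with hFF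
  set GG : Polynomial ℤ := ∑ t ∈ Finset.range N, Polynomial.monomial t ((bG t : ℤ)) with hGG
  have haF : Polynomial.aeval ζ FF = A i0 := by rw [hFF, JL_aeval_of_b, hrepF]
  have haG : Polynomial.aeval ζ GG = ∑ y ∈ D j0, χ y⁻¹ := by rw [hGG, JL_aeval_of_b, hrepG]
  -- lam = q ^ f * μ0 with q ∤ μ0
  obtain ⟨μ0, hμ0⟩ := hqf.1
  have hqμ0 : ¬ q ∣ μ0 := by
    intro hd
    exact hqf.2 (by rw [hμ0, pow_succ]; exact mul_dvd_mul_left _ hd)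
  have hirr := JL_cyclo_irred hq hNpos (JL_primroot_transfer hp he'pos hle hprim)
  -- the product is ± q^f μ0
  have hprodeq : ∃ μint : ℤ, (¬ (q : ℤ) ∣ μint) ∧
      Polynomial.aeval ζ FF * Polynomial.aeval ζ GG = (q : ℂ) ^ f * (μint : ℂ) := by
    have hcast : ((lam : ℝ) : ℂ) = (q : ℂ) ^ f * ((μ0 : ℤ) : ℂ) := by
      rw [hμ0]; push_cast; ring
    have hqμint : ¬ (q : ℤ) ∣ (μ0 : ℤ) := fun hd => hqμ0 (Int.ofNat_dvd.1 hd)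
    rcases hij with hpos | hneg
    · exact ⟨(μ0 : ℤ), hqμint, by rw [haF, haG, hpos, hcast]⟩
    · refine ⟨-(μ0 : ℤ), fun hd => hqμint ((dvd_neg).1 hd), ?_⟩
      rw [haF, haG, hneg, hcast]
      push_cast
      ring
  obtain ⟨μint, hqμint, hprod⟩ := hprodeq
  obtain ⟨a, b, hab, ⟨wA, hwA⟩, ⟨wB, hwB⟩⟩ :=
    JL_key hζ hNpos hq hirr f μint FF GG hqμint hprod
  have hzero : A i0 * (∑ y ∈ D j0, χ y⁻¹) = 0 := by
    have hmax : c ≤ a ∨ c ≤ b := by omega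
    rcases hmax with hca | hcb
    · have hdvdF : ∃ w : Polynomial ℤ, (∑ t ∈ Finset.range N, (bF t : ℂ) * ζ ^ t)
          = (q : ℂ) ^ c * Polynomial.aeval ζ w := by
        refine ⟨(Polynomial.C ((q : ℤ))) ^ (a - c) * wA, ?_⟩
        rw [← hrepF, ← haF, hwA, map_mul, map_pow, Polynomial.aeval_C]
        simp only [algebraMap_int_eq, eq_intCast]
        push_cast
        rw [show (q : ℂ) ^ a = (q : ℂ) ^ c * (q : ℂ) ^ (a - c) from by
          rw [← pow_add]; congr 1; omega]
        ring
      have h0 := JL_zero hp he'pos hN_def hζ c V hVlt bF hbFle hdvdF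
      rw [← hrepF] at h0
      rw [h0, zero_mul]
    · have hdvdG : ∃ w : Polynomial ℤ, (∑ t ∈ Finset.range N, (bG t : ℂ) * ζ ^ t)
          = (q : ℂ) ^ c * Polynomial.aeval ζ w := by
        refine ⟨(Polynomial.C ((q : ℤ))) ^ (b - c) * wB, ?_⟩
        rw [← hrepG, ← haG, hwB, map_mul, map_pow, Polynomial.aeval_C]
        simp only [algebraMap_int_eq, eq_intCast]
        push_cast
        rw [show (q : ℂ) ^ b = (q : ℂ) ^ c * (q : ℂ) ^ (b - c) from by
          rw [← pow_add]; congr 1; omega]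
        ring
      have h0 := JL_zero hp he'pos hN_def hζ c V hVlt bG hbGle hdvdG
      rw [← hrepG] at h0
      rw [h0, mul_zero]
  rcases hij with hpos | hneg
  · rw [hzero] at hpos
    have : (lam : ℝ) = 0 := by exact_mod_cast hpos.symm
    exact hlamR.ne' this
  · rw [hzero] at hneg
    have : -((lam : ℝ) : ℂ) = 0 := hneg.symm
    have : (lam : ℝ) = 0 := by
      have := neg_eq_zero.1 this
      exact_mod_cast this
    exact hlamR.ne' this
end

section
/- Let D be a subset of a finite abelian group G, let p > 2 be a prime divisor of |G|, and write |G| = p^a·v' with gcd(v',p) = 1. If p^a does not divide |D|, then there exists a nonprincipal character χ of G whose order is p^s for some integer s with 1 ≤ s ≤ a such that χ(D) ≠ 0. -/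
open Finset


lemma aux_sum_char_eq_zero {Q : Type*} [CommGroup Q] [Finite Q] [Fintype (Q →* ℂˣ)]
    [HasEnoughRootsOfUnity ℂ (Monoid.exponent Q)]
    {x : Q} (hx : x ≠ 1) :
    ∑ ψ : Q →* ℂˣ, ((ψ x : ℂˣ) : ℂ) = 0 := by
  obtain ⟨φ, hφ⟩ := CommGroup.exists_apply_ne_one_of_hasEnoughRootsOfUnity Q ℂ hx
  have key : ∑ ψ : Q →* ℂˣ, ((ψ x : ℂˣ) : ℂ)
      = ((φ x : ℂˣ) : ℂ) * ∑ ψ : Q →* ℂˣ, ((ψ x : ℂˣ) : ℂ) := by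
    rw [Finset.mul_sum]
    refine Fintype.sum_bijective (φ⁻¹ * ·) (Group.mulLeft_bijective φ⁻¹) _ _ (fun ψ => ?_)
    simp [Units.val_mul]
  have hne : ((φ x : ℂˣ) : ℂ) - 1 ≠ 0 := by
    rw [sub_ne_zero]
    exact fun h => hφ (Units.val_eq_one.mp h)
  have h0 : (((φ x : ℂˣ) : ℂ) - 1) * ∑ ψ : Q →* ℂˣ, ((ψ x : ℂˣ) : ℂ) = 0 := by
    rw [sub_mul, one_mul, ← key, sub_self]
  exact (mul_eq_zero.mp h0).resolve_left hne

/-- If `D` is a subset of a finite abelian group `G`, `p > 2` is a prime divisor of `|G|`,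
`|G| = p^a · v'` with `gcd(v',p) = 1`, and `p^a ∤ |D|`, then there is a nonprincipal
character `χ` of `G` of order `p^s` for some `1 ≤ s ≤ a` with `χ(D) ≠ 0`. -/
theorem exists_char_p_power_order_ne_zero
    {G : Type*} [CommGroup G] [Fintype G] [DecidableEq G]
    (D : Finset G) (p a v' : ℕ) (hp : p.Prime) (hp2 : 2 < p)
    (hpdvd : p ∣ Fintype.card G)
    (hcard : Fintype.card G = p ^ a * v') (hgcd : Nat.Coprime v' p)
    (hD : ¬ p ^ a ∣ D.card) :
    ∃ (χ : G →* ℂ) (s : ℕ), χ ≠ 1 ∧ 1 ≤ s ∧ s ≤ a ∧ orderOf χ = p ^ s ∧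
      (∑ g ∈ D, χ g) ≠ 0 := by
  classical
  haveI : Fact p.Prime := ⟨hp⟩
  by_contra hcon
  push_neg at hcon
  -- the p-power map and its kernel/range
  set f : G →* G := powMonoidHom (p ^ a) with hf
  have hcardG : Nat.card G = p ^ a * v' := by rw [Nat.card_eq_fintype_card, hcard]
  have hv' : v' ≠ 0 := by
    rintro rfl
    simp [Nat.card_eq_zero] at hcardG
  -- kernel has cardinality p ^ a
  have hker_card : Nat.card f.ker = p ^ a := by
    obtain ⟨P⟩ := Sylow.nonempty (p := p) (G := G)
    have hfact : (Nat.card G).factorization p = a := by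
      rw [hcardG, Nat.factorization_mul (by positivity) hv', Nat.Prime.factorization_pow hp]
      have hnd : ¬ p ∣ v' := (Nat.Prime.coprime_iff_not_dvd hp).mp hgcd.symm
      have : v'.factorization p = 0 := Nat.factorization_eq_zero_of_not_dvd hnd
      simp [this]
    have hP : Nat.card P = p ^ a := by rw [Sylow.card_eq_multiplicity, hfact]
    have hPle : (P : Subgroup G) ≤ f.ker := by
      intro g hg
      have : orderOf g ∣ p ^ a := by
        have h1 : orderOf (⟨g, hg⟩ : (P : Subgroup G)) ∣ Nat.card (P : Subgroup G) :=
          orderOf_dvd_natCard _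
        rw [Subgroup.orderOf_mk] at h1
        exact hP ▸ h1
      simp only [MonoidHom.mem_ker, hf, powMonoidHom_apply]
      exact orderOf_dvd_iff_pow_eq_one.mp this
    have hpgroup : IsPGroup p f.ker := fun g => ⟨a, by
      have hg : (g : G) ^ p ^ a = 1 := g.2
      ext
      simpa using hg⟩
    obtain ⟨b, hb⟩ := IsPGroup.iff_card.mp hpgroup
    have hdvd1 : p ^ a ∣ p ^ b := by
      rw [← hP, ← hb]; exact Subgroup.card_dvd_of_le hPle
    have hdvd2 : p ^ b ∣ p ^ a := by
      have h1 : (p : ℕ) ^ b ∣ p ^ a * v' := by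
        rw [← hb, ← hcardG]; exact Subgroup.card_subgroup_dvd_card _
      exact (Nat.Coprime.dvd_of_dvd_mul_right
        (Nat.Coprime.pow_left b hgcd.symm) h1)
    rw [hb, Nat.dvd_antisymm hdvd2 hdvd1]
  -- quotient by the range has cardinality p ^ a
  set K : Subgroup G := f.range with hK
  have hrange_card : Nat.card K = v' := by
    have h1 : Nat.card G = Nat.card (G ⧸ f.ker) * Nat.card f.ker :=
      Subgroup.card_eq_card_quotient_mul_card_subgroup f.ker
    have h2 : Nat.card (G ⧸ f.ker) = Nat.card K :=
      Nat.card_congr (QuotientGroup.quotientKerEquivRange f).toEquiv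
    rw [h2, hker_card, hcardG, mul_comm (p ^ a) v'] at h1
    exact (Nat.eq_of_mul_eq_mul_right (by positivity) h1).symm
  have hQ_card : Nat.card (G ⧸ K) = p ^ a := by
    have h1 : Nat.card G = Nat.card (G ⧸ K) * Nat.card K :=
      Subgroup.card_eq_card_quotient_mul_card_subgroup K
    rw [hrange_card, hcardG] at h1
    exact (Nat.eq_of_mul_eq_mul_right (Nat.pos_of_ne_zero hv') h1.symm)
  set Q := G ⧸ K with hQdef
  -- instances
  haveI : NeZero ((Monoid.exponent Q : ℕ) : ℂ) := by
    refine ⟨?_⟩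
    have : Monoid.exponent Q ≠ 0 := Monoid.exponent_ne_zero_of_finite
    exact_mod_cast Nat.cast_ne_zero.mpr this
  obtain ⟨e⟩ := CommGroup.monoidHom_mulEquiv_of_hasEnoughRootsOfUnity Q ℂ
  haveI : Finite (Q →* ℂˣ) := Finite.of_equiv Q e.toEquiv.symm
  haveI : Fintype (Q →* ℂˣ) := Fintype.ofFinite _
  have hΨ : Nat.card (Q →* ℂˣ) = p ^ a := by
    rw [Nat.card_congr e.toEquiv, hQ_card]
  -- the map from characters of Q to characters of G
  set π : G →* Q := QuotientGroup.mk' K with hπ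
  have hπsurj : Function.Surjective π := QuotientGroup.mk'_surjective K
  set F : (Q →* ℂˣ) →* (G →* ℂ) :=
    { toFun := fun ψ => (Units.coeHom ℂ).comp (ψ.comp π)
      map_one' := by ext g; simp
      map_mul' := fun ψ ψ' => by ext g; simp } with hF
  have hFinj : Function.Injective F := by
    intro ψ ψ' h
    ext x
    have := congrArg (fun (χ : G →* ℂ) => χ x) h
    simp [hF, hπ, Units.ext_iff] at this
    exact this
  -- double counting
  have hS : ∑ ψ : Q →* ℂˣ, ∑ d ∈ D, ((ψ (π d) : ℂˣ) : ℂ) = (D.card : ℂ) := by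
    rw [Fintype.sum_eq_single (1 : Q →* ℂˣ) ?_]
    · simp
    · intro ψ hψ
      -- ψ nontrivial: its order is p ^ s
      have hord : orderOf ψ ∣ p ^ a := hΨ ▸ orderOf_dvd_natCard ψ
      obtain ⟨s, hsa, hords⟩ := (Nat.dvd_prime_pow hp).mp hord
      have hs1 : 1 ≤ s := by
        rcases Nat.eq_zero_or_pos s with rfl | h
        · exact absurd (orderOf_eq_one_iff.mp (by simpa using hords)) hψ
        · exact h
      have hχ1 : F ψ ≠ 1 := fun h => hψ (hFinj (h.trans (map_one F).symm))
      have hχord : orderOf (F ψ) = p ^ s := by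
        rw [orderOf_injective F hFinj ψ, hords]
      have := hcon (F ψ) s hχ1 hs1 hsa hχord
      simpa [hF] using this
  have hS2 : ∑ ψ : Q →* ℂˣ, ∑ d ∈ D, ((ψ (π d) : ℂˣ) : ℂ)
      = (p ^ a : ℂ) * ((D.filter (fun d => π d = 1)).card : ℂ) := by
    rw [Finset.sum_comm]
    have : ∀ d ∈ D, ∑ ψ : Q →* ℂˣ, ((ψ (π d) : ℂˣ) : ℂ)
        = if π d = 1 then (p ^ a : ℂ) else 0 := by
      intro d _
      by_cases h : π d = 1
      · rw [if_pos h, h]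
        simp only [map_one, Units.val_one, Finset.sum_const, card_univ, nsmul_eq_mul, mul_one]
        rw [← Nat.card_eq_fintype_card, hΨ]
        push_cast
        ring
      · rw [if_neg h]
        exact aux_sum_char_eq_zero h
    rw [Finset.sum_congr rfl this, ← Finset.sum_filter, Finset.sum_const, nsmul_eq_mul, mul_comm]
  rw [hS2] at hS
  apply hD
  refine ⟨(D.filter (fun d => π d = 1)).card, ?_⟩
  have : ((p ^ a * (D.filter (fun d => π d = 1)).card : ℕ) : ℂ) = (D.card : ℂ) := by
    push_cast
    rw [← hS]
  exact_mod_cast this.symm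
end

section
/- Let {D_1,...,D_m} be a (v,m,k,λ)-SEDF in a finite abelian group G with m ≥ 3 and set D = D_1 ∪ ... ∪ D_m. Let p > 2 be a prime divisor of v and let χ be a nonprincipal character of G of order p^a such that χ(D) ≠ 0. Let a_χ < b_χ be the coprime positive integers such that 1 + 4λ/|χ(D)|² = (b_χ/a_χ)². Then: if gcd(a_χ+b_χ, 2a_χ) = 1, there exists X ∈ ℤ[ζ_{p^a}] with χ(D) = 2a_χ·X and X·conj(X) = λ/(b_χ²−a_χ²); otherwise, there exists X ∈ ℤ[ζ_{p^a}] with χ(D) = a_χ·X and X·conj(X) = 4λ/(b_χ²−a_χ²). -/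
set_option maxHeartbeats 2000000 in
/-- Let `{D_1,…,D_m}` be a `(v,m,k,λ)`-SEDF in `G` with `m ≥ 3`, `D = ⋃ D_i`, `p > 2` a
prime divisor of `v`, `χ` a nonprincipal character of order `p^a` with `χ(D) ≠ 0`, and
`a_χ < b_χ` coprime positive integers with `1 + 4λ/|χ(D)|² = (b_χ/a_χ)²`.  Then:
if `gcd(a_χ+b_χ, 2a_χ) = 1`, `χ(D) = 2a_χ·X` for some `X ∈ ℤ[ζ_{p^a}]` with
`X·conj(X) = λ/(b_χ²-a_χ²)`; otherwise, `χ(D) = a_χ·X` for some `X ∈ ℤ[ζ_{p^a}]` with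
`X·conj(X) = 4λ/(b_χ²-a_χ²)`. -/
theorem sedf_char_sum_structure {G : Type*} [CommGroup G] [Fintype G] [DecidableEq G]
    {v m k lam : ℕ} (hv : Fintype.card G = v)
    (D : Fin m → Finset G) (h : IsSEDF D k lam) (hm : 3 ≤ m)
    (p : ℕ) (hp : p.Prime) (hp2 : 2 < p) (hpv : p ∣ v)
    (a : ℕ) (χ : G →* ℂ) (hχ : χ ≠ 1) (hord : orderOf χ = p ^ a)
    (hD : (∑ g ∈ Finset.univ.biUnion D, χ g) ≠ 0)
    (aχ bχ : ℕ) (haχ : 0 < aχ) (hab : aχ < bχ) (hcop : Nat.Coprime aχ bχ)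
    (heq : 1 + 4 * (lam : ℝ) / Complex.normSq (∑ g ∈ Finset.univ.biUnion D, χ g)
      = ((bχ : ℝ) / (aχ : ℝ)) ^ 2)
    (ζ : ℂ) (hζ : IsPrimitiveRoot ζ (p ^ a)) :
    (Nat.gcd (aχ + bχ) (2 * aχ) = 1 →
      ∃ X ∈ Algebra.adjoin ℤ ({ζ} : Set ℂ),
        (∑ g ∈ Finset.univ.biUnion D, χ g) = 2 * (aχ : ℂ) * X ∧
        X * (starRingEnd ℂ) X = (lam : ℂ) / ((bχ : ℂ) ^ 2 - (aχ : ℂ) ^ 2)) ∧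
    (Nat.gcd (aχ + bχ) (2 * aχ) ≠ 1 →
      ∃ X ∈ Algebra.adjoin ℤ ({ζ} : Set ℂ),
        (∑ g ∈ Finset.univ.biUnion D, χ g) = (aχ : ℂ) * X ∧
        X * (starRingEnd ℂ) X = 4 * (lam : ℂ) / ((bχ : ℂ) ^ 2 - (aχ : ℂ) ^ 2)) := by
  classical
  obtain ⟨hm0, hk0, hlam0, hcard, hdisj, hsedf⟩ := h
  set S : ℂ := ∑ g ∈ Finset.univ.biUnion D, χ g with hSdef
  set c : Fin m → ℂ := fun j => ∑ g ∈ D j, χ g with hcdef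
  -- sum over all i
  have hSsum : ∑ j, c j = S := by
    rw [hSdef, Finset.sum_biUnion]
    intro i _ j _ hij
    exact hdisj i j hij
  -- character values are roots of unity
  have hnorm : ∀ g : G, ‖χ g‖ = 1 := by
    intro g
    refine Complex.norm_eq_one_of_pow_eq_one (n := Fintype.card G) ?_ Fintype.card_ne_zero
    rw [← map_pow, pow_card_eq_one, map_one]
  have hconj : ∀ g : G, (starRingEnd ℂ) (χ g) = (χ g)⁻¹ :=
    fun g => (Complex.inv_eq_conj (hnorm g)).symm
  -- the key character equation
  have key : ∀ j, (S - c j) * (starRingEnd ℂ) (c j) = -(lam : ℂ) := by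
    intro j
    have hfib : ∀ l, (∑ x ∈ (D l ×ˢ D j), χ (x.1 * x.2⁻¹))
        = ∑ g : G, ((((D l ×ˢ D j)).filter (fun x => x.1 * x.2⁻¹ = g)).card : ℂ) * χ g := by
      intro l
      rw [← Finset.sum_fiberwise_of_maps_to (g := fun x : G × G => x.1 * x.2⁻¹)
        (fun x _ => Finset.mem_univ (x.1 * x.2⁻¹)) (fun x => χ (x.1 * x.2⁻¹))]
      refine Finset.sum_congr rfl fun g _ => ?_
      calc (∑ x ∈ (D l ×ˢ D j).filter (fun x => x.1 * x.2⁻¹ = g), χ (x.1 * x.2⁻¹))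
          = ∑ _x ∈ (D l ×ˢ D j).filter (fun x => x.1 * x.2⁻¹ = g), χ g :=
            Finset.sum_congr rfl fun x hx => by rw [(Finset.mem_filter.mp hx).2]
        _ = _ := by rw [Finset.sum_const, nsmul_eq_mul]
    have h1 : (∑ l ∈ Finset.univ.filter (fun l => l ≠ j),
        ∑ x ∈ (D l ×ˢ D j), χ (x.1 * x.2⁻¹)) = -(lam : ℂ) := by
      calc (∑ l ∈ Finset.univ.filter (fun l => l ≠ j), ∑ x ∈ (D l ×ˢ D j), χ (x.1 * x.2⁻¹))
          = ∑ l ∈ Finset.univ.filter (fun l => l ≠ j),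
              ∑ g : G, ((((D l ×ˢ D j)).filter (fun x => x.1 * x.2⁻¹ = g)).card : ℂ) * χ g :=
            Finset.sum_congr rfl fun l _ => hfib l
        _ = ∑ g : G, ((∑ l ∈ Finset.univ.filter (fun l => l ≠ j),
              (((D l ×ˢ D j)).filter (fun x => x.1 * x.2⁻¹ = g)).card : ℕ) : ℂ) * χ g := by
            rw [Finset.sum_comm]
            refine Finset.sum_congr rfl fun g _ => ?_
            rw [← Finset.sum_mul]
            push_cast
            ring
        _ = ∑ g : G, ((if g = 1 then 0 else (lam : ℂ))) * χ g := by
            refine Finset.sum_congr rfl fun g _ => ?_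
            rw [hsedf j g]
            split <;> simp
        _ = -(lam : ℂ) := by
            have hsplit : ∀ g : G, (if g = 1 then 0 else (lam : ℂ)) * χ g
                = (lam : ℂ) * χ g - (if g = 1 then (lam : ℂ) * χ g else 0) := by
              intro g; split <;> ring
            rw [Finset.sum_congr rfl fun g _ => hsplit g, Finset.sum_sub_distrib,
              ← Finset.mul_sum, sum_hom_units_eq_zero χ hχ,
              Finset.sum_ite_eq' Finset.univ (1 : G) (fun g => (lam : ℂ) * χ g),
              if_pos (Finset.mem_univ (1 : G)), map_one]
            ring
    have h2 : ∀ l, (∑ x ∈ (D l ×ˢ D j), χ (x.1 * x.2⁻¹))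
        = (∑ g ∈ D l, χ g) * (starRingEnd ℂ) (c j) := by
      intro l
      rw [hcdef, map_sum, Finset.sum_mul_sum, Finset.sum_product]
      refine Finset.sum_congr rfl fun x _ => Finset.sum_congr rfl fun y _ => ?_
      rw [map_mul, map_inv, hconj]
    have h3 : (∑ l ∈ Finset.univ.filter (fun l => l ≠ j), (∑ g ∈ D l, χ g)) = S - c j := by
      rw [Finset.filter_ne' Finset.univ j, Finset.sum_erase_eq_sub (Finset.mem_univ j), hSsum]
    calc (S - c j) * (starRingEnd ℂ) (c j)
        = ∑ l ∈ Finset.univ.filter (fun l => l ≠ j), (∑ g ∈ D l, χ g) * (starRingEnd ℂ) (c j) := by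
          rw [← Finset.sum_mul, h3]
      _ = ∑ l ∈ Finset.univ.filter (fun l => l ≠ j), ∑ x ∈ (D l ×ˢ D j), χ (x.1 * x.2⁻¹) :=
          Finset.sum_congr rfl fun l _ => (h2 l).symm
      _ = -(lam : ℂ) := h1
  -- real quantities
  set n : ℝ := Complex.normSq S with hndef
  have hn0 : 0 < n := Complex.normSq_pos.mpr hD
  have ha0 : (0:ℝ) < aχ := by exact_mod_cast haχ
  have habR : (aχ:ℝ) < bχ := by exact_mod_cast hab
  have haC : (aχ:ℂ) ≠ 0 := Nat.cast_ne_zero.mpr haχ.ne'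
  have hnC : (n:ℂ) ≠ 0 := by exact_mod_cast hn0.ne'
  have hSS : S * (starRingEnd ℂ) S = (n:ℂ) := Complex.mul_conj S
  have e2 : ∀ j, (starRingEnd ℂ) S * c j = ((Complex.normSq (c j) - lam : ℝ) : ℂ) := by
    intro j
    have hk := key j
    have hcc : c j * (starRingEnd ℂ) (c j) = ((Complex.normSq (c j) : ℝ) : ℂ) :=
      Complex.mul_conj (c j)
    have e1 : S * (starRingEnd ℂ) (c j) = ((Complex.normSq (c j) - lam : ℝ) : ℂ) := by
      push_cast
      linear_combination hk + hcc
    have := congrArg (starRingEnd ℂ) e1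
    simpa using this
  set t : Fin m → ℝ := fun j => (Complex.normSq (c j) - lam) / n with htdef
  have hct : ∀ j, c j = ((t j : ℝ) : ℂ) * S := by
    intro j
    have hmain : c j * (n:ℂ) = ((Complex.normSq (c j) - lam : ℝ):ℂ) * S := by
      rw [← e2 j, ← hSS]
      ring
    simp only [htdef]
    push_cast
    rw [div_mul_eq_mul_div, eq_comm, div_eq_iff hnC]
    push_cast at hmain
    linear_combination -hmain
  have quad : ∀ j, t j * n - (t j)^2 * n = -(lam : ℝ) := by
    intro j
    have hk := key j
    rw [hct j, map_mul, Complex.conj_ofReal] at hk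
    have hcx : ((t j * n - (t j)^2 * n : ℝ) : ℂ) = ((-(lam:ℝ) : ℝ) : ℂ) := by
      push_cast
      linear_combination hk - (((t j : ℝ):ℂ) - ((t j : ℝ):ℂ)^2) * hSS
    exact_mod_cast hcx
  have hsq : ∀ j, (2 * t j - 1)^2 = ((bχ:ℝ)/(aχ:ℝ))^2 := by
    intro j
    rw [← heq]
    have hq := quad j
    field_simp
    nlinarith [hq]
  have ht : ∀ j, t j = ((aχ:ℝ)+bχ)/(2*aχ) ∨ t j = ((aχ:ℝ)-bχ)/(2*aχ) := by
    intro j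
    have hfac : (2*t j - 1 - (bχ:ℝ)/aχ) * (2*t j - 1 + (bχ:ℝ)/aχ) = 0 := by
      have := hsq j
      nlinarith [this]
    rcases mul_eq_zero.mp hfac with h' | h'
    · left
      field_simp at h' ⊢
      linarith
    · right
      field_simp at h' ⊢
      linarith
  have htsum : ∑ j, t j = 1 := by
    have hcx : ((∑ j, t j : ℝ) : ℂ) * S = 1 * S := by
      push_cast
      rw [Finset.sum_mul, one_mul]
      calc (∑ j, ((t j : ℝ):ℂ) * S) = ∑ j, c j := Finset.sum_congr rfl fun j _ => (hct j).symm
        _ = S := hSsum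
    have := mul_right_cancel₀ hD hcx
    exact_mod_cast this
  have hm3 : (3:ℝ) ≤ (m:ℝ) := by exact_mod_cast hm
  have hex₁ : ∃ j, t j = ((aχ:ℝ)+bχ)/(2*aχ) := by
    by_contra hno
    push_neg at hno
    have hall : ∀ j, t j = ((aχ:ℝ)-bχ)/(2*aχ) := fun j => ((ht j).resolve_left (hno j))
    have hs1 : (1:ℝ) = m * (((aχ:ℝ)-bχ)/(2*aχ)) := by
      rw [← htsum, Finset.sum_congr rfl fun j _ => hall j, Finset.sum_const,
        Finset.card_univ, Fintype.card_fin, nsmul_eq_mul]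
    have hle : ((aχ:ℝ)-bχ)/(2*aχ) ≤ 0 :=
      div_nonpos_iff.mpr (Or.inr ⟨by linarith, by linarith⟩)
    have hmx : (m:ℝ) * (((aχ:ℝ)-bχ)/(2*aχ)) ≤ 0 :=
      mul_nonpos_iff.mpr (Or.inl ⟨by linarith, hle⟩)
    linarith [hs1, hmx]
  have hex₂ : ∃ j, t j = ((aχ:ℝ)-bχ)/(2*aχ) := by
    by_contra hno
    push_neg at hno
    have hall : ∀ j, t j = ((aχ:ℝ)+bχ)/(2*aχ) := fun j => ((ht j).resolve_right (hno j))
    have hs1 : (1:ℝ) = m * (((aχ:ℝ)+bχ)/(2*aχ)) := by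
      rw [← htsum, Finset.sum_congr rfl fun j _ => hall j, Finset.sum_const,
        Finset.card_univ, Fintype.card_fin, nsmul_eq_mul]
    have hgt : 1 < ((aχ:ℝ)+bχ)/(2*aχ) := by
      rw [lt_div_iff₀ (by linarith : (0:ℝ) < 2*aχ)]
      linarith
    have hmx : (3:ℝ) * 1 ≤ (m:ℝ) * (((aχ:ℝ)+bχ)/(2*aχ)) :=
      mul_le_mul hm3 hgt.le (by linarith) (by linarith)
    linarith [hs1, hmx]
  obtain ⟨j₁, hj₁⟩ := hex₁
  obtain ⟨j₂, hj₂⟩ := hex₂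
  have hA : 2*(aχ:ℂ) * c j₁ = ((aχ:ℂ)+bχ) * S := by
    rw [hct j₁, hj₁]
    push_cast
    field_simp
  have hB : 2*(aχ:ℂ) * c j₂ = ((aχ:ℂ)-bχ) * S := by
    rw [hct j₂, hj₂]
    push_cast
    field_simp
  -- membership in ℤ[ζ]
  haveI : NeZero (p ^ a) := ⟨pow_ne_zero a hp.pos.ne'⟩
  have hmemχ : ∀ g : G, χ g ∈ Algebra.adjoin ℤ ({ζ} : Set ℂ) := by
    intro g
    have hpow : (χ g) ^ (p ^ a) = 1 := by
      have h1 : χ ^ (p ^ a) = 1 := by rw [← hord]; exact pow_orderOf_eq_one χ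
      calc (χ g) ^ (p ^ a) = (χ ^ (p ^ a)) g := rfl
        _ = 1 := by rw [h1]; rfl
    obtain ⟨i, _, hi⟩ := hζ.eq_pow_of_pow_eq_one hpow
    rw [← hi]
    exact pow_mem (Algebra.self_mem_adjoin_singleton ℤ ζ) i
  have hmemc : ∀ j, c j ∈ Algebra.adjoin ℤ ({ζ} : Set ℂ) := fun j =>
    Subalgebra.sum_mem _ (fun g _ => hmemχ g)
  have hmemI : ∀ (u : ℤ), (u : ℂ) ∈ Algebra.adjoin ℤ ({ζ} : Set ℂ) := by
    intro u
    have : algebraMap ℤ ℂ u ∈ Algebra.adjoin ℤ ({ζ} : Set ℂ) :=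
      Subalgebra.algebraMap_mem _ u
    simpa using this
  -- normSq relation
  have hba2 : (0:ℝ) < (bχ:ℝ)^2 - (aχ:ℝ)^2 := by nlinarith [habR, ha0]
  have hnval : n * ((bχ:ℝ)^2 - (aχ:ℝ)^2) = 4 * lam * (aχ:ℝ)^2 := by
    have h' := heq
    field_simp at h'
    nlinarith [h']
  have hcast : ∀ (x y : ℝ), y ≠ 0 → ((x / y : ℝ) : ℂ) = (x:ℂ)/(y:ℂ) := by
    intro x y _; push_cast; ring
  constructor
  · -- coprime case
    intro hg
    have h2cop : IsCoprime ((aχ:ℤ)+bχ) (2*(aχ:ℤ)) := by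
      rw [Int.isCoprime_iff_gcd_eq_one]
      rw [show ((aχ:ℤ)+bχ) = ((aχ+bχ : ℕ) : ℤ) by push_cast; ring,
        show (2*(aχ:ℤ)) = ((2*aχ : ℕ) : ℤ) by push_cast; ring,
        Int.gcd_natCast_natCast]
      exact hg
    have hABcop : IsCoprime ((aχ:ℤ)+bχ) ((aχ:ℤ)-bχ) := by
      have h3 := h2cop.add_mul_left_right (-1)
      rwa [show 2*(aχ:ℤ) + ((aχ:ℤ)+bχ)*(-1) = (aχ:ℤ)-bχ by ring] at h3
    obtain ⟨u, w, huw⟩ := hABcop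
    set X : ℂ := (u:ℂ) * c j₁ + (w:ℂ) * c j₂ with hXdef
    have h2aX : 2*(aχ:ℂ) * X = S := by
      have hcast2 : ((u * ((aχ:ℤ)+bχ) + w * ((aχ:ℤ)-bχ) : ℤ) : ℂ) = 1 := by
        rw [huw]; norm_num
      push_cast at hcast2
      calc 2*(aχ:ℂ) * X = (u:ℂ) * (2*(aχ:ℂ) * c j₁) + (w:ℂ) * (2*(aχ:ℂ) * c j₂) := by
            rw [hXdef]; ring
        _ = ((u:ℂ) * ((aχ:ℂ)+bχ) + (w:ℂ) * ((aχ:ℂ)-bχ)) * S := by rw [hA, hB]; ring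
        _ = S := by rw [hcast2, one_mul]
    refine ⟨X, ?_, h2aX.symm, ?_⟩
    · exact Subalgebra.add_mem _
        (Subalgebra.mul_mem _ (hmemI u) (hmemc j₁))
        (Subalgebra.mul_mem _ (hmemI w) (hmemc j₂))
    · have h2a : (2*(aχ:ℂ)) ≠ 0 := by
        simp [haC]
      have hXval : X = S / (2*(aχ:ℂ)) := by
        rw [eq_div_iff h2a]
        linear_combination h2aX
      have hcX : (starRingEnd ℂ) X = (starRingEnd ℂ) S / (2*(aχ:ℂ)) := by
        rw [hXval, map_div₀]
        congr 1
        rw [map_mul, Complex.conj_natCast, map_ofNat]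
      have hre : n / (4*(aχ:ℝ)^2) = (lam:ℝ)/((bχ:ℝ)^2 - (aχ:ℝ)^2) := by
        rw [div_eq_div_iff (by positivity) hba2.ne']
        linarith [hnval]
      calc X * (starRingEnd ℂ) X = (S * (starRingEnd ℂ) S) / ((2*(aχ:ℂ))*(2*(aχ:ℂ))) := by
            rw [hcX, hXval]; ring
        _ = ((n : ℝ) : ℂ) / ((4*(aχ:ℝ)^2 : ℝ) : ℂ) := by
            rw [hSS, show ((2:ℂ)*(aχ:ℂ))*((2:ℂ)*(aχ:ℂ)) = ((4*(aχ:ℝ)^2 : ℝ):ℂ) by push_cast; ring]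
        _ = ((n / (4*(aχ:ℝ)^2) : ℝ) : ℂ) := (hcast _ _ (by positivity)).symm
        _ = (((lam:ℝ)/((bχ:ℝ)^2 - (aχ:ℝ)^2) : ℝ) : ℂ) := by rw [hre]
        _ = (lam : ℂ) / ((bχ:ℂ)^2 - (aχ:ℂ)^2) := by push_cast; ring
  · -- non-coprime case
    intro hg
    have hd2 : 2 ∣ aχ + bχ := by
      have hco : Nat.Coprime (aχ + bχ) aχ := by
        rw [Nat.add_comm]
        exact (Nat.coprime_add_self_left).mpr hcop.symm
      have h1 : Nat.gcd (aχ+bχ) (2*aχ) ∣ 2*aχ := Nat.gcd_dvd_right _ _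
      have h2 : Nat.Coprime (Nat.gcd (aχ+bχ) (2*aχ)) aχ :=
        Nat.Coprime.coprime_dvd_left (Nat.gcd_dvd_left _ _) hco
      have hdvd : Nat.gcd (aχ+bχ) (2*aχ) ∣ 2 :=
        h2.dvd_of_dvd_mul_right h1
      have hg2 : Nat.gcd (aχ+bχ) (2*aχ) = 2 := by
        rcases (Nat.dvd_prime Nat.prime_two).mp hdvd with h'|h'
        · exact absurd h' hg
        · exact h'
      exact hg2 ▸ Nat.gcd_dvd_left _ _
    obtain ⟨s, hs⟩ := hd2
    have hsZ : (aχ:ℤ) + bχ = 2*s := by exact_mod_cast hs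
    have hABcop : IsCoprime (s:ℤ) ((aχ:ℤ) - s) := by
      rw [Int.isCoprime_iff_gcd_eq_one]
      have hdl : (Int.gcd (s:ℤ) ((aχ:ℤ)-s) : ℤ) ∣ (s:ℤ) := Int.gcd_dvd_left _ _
      have hdr : (Int.gcd (s:ℤ) ((aχ:ℤ)-s) : ℤ) ∣ ((aχ:ℤ)-s) := Int.gcd_dvd_right _ _
      have h1 : (Int.gcd (s:ℤ) ((aχ:ℤ)-s) : ℤ) ∣ (aχ:ℤ) := by
        have := dvd_add hdl hdr
        simpa using this
      have h2 : (Int.gcd (s:ℤ) ((aχ:ℤ)-s) : ℤ) ∣ (bχ:ℤ) := by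
        have := dvd_sub hdl hdr
        rwa [show (s:ℤ) - ((aχ:ℤ)-s) = (bχ:ℤ) by linarith [hsZ]] at this
      have h3 : (Int.gcd (s:ℤ) ((aχ:ℤ)-s) : ℤ) ∣ (Int.gcd (aχ:ℤ) (bχ:ℤ) : ℤ) :=
        Int.dvd_coe_gcd h1 h2
      rw [Int.gcd_natCast_natCast, hcop] at h3
      exact_mod_cast Nat.dvd_one.mp (by exact_mod_cast h3)
    obtain ⟨u, w, huw⟩ := hABcop
    have hA' : (aχ:ℂ) * c j₁ = (s:ℂ) * S := by
      have hcs : (aχ:ℂ) + bχ = 2*(s:ℂ) := by exact_mod_cast hsZ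
      have h2' : (2:ℂ) * ((aχ:ℂ) * c j₁) = 2 * ((s:ℂ) * S) := by
        rw [show (2:ℂ) * ((aχ:ℂ) * c j₁) = 2*(aχ:ℂ) * c j₁ by ring, hA, hcs]; ring
      exact mul_left_cancel₀ two_ne_zero h2'
    have hB' : (aχ:ℂ) * c j₂ = ((aχ:ℂ) - s) * S := by
      have hcs : (aχ:ℂ) - bχ = 2*((aχ:ℂ) - s) := by
        have : (bχ:ℂ) = 2*(s:ℂ) - aχ := by exact_mod_cast (by linarith [hsZ] : (bχ:ℤ) = 2*s - aχ)
        rw [this]; ring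
      have h2' : (2:ℂ) * ((aχ:ℂ) * c j₂) = 2 * (((aχ:ℂ)-s) * S) := by
        rw [show (2:ℂ) * ((aχ:ℂ) * c j₂) = 2*(aχ:ℂ) * c j₂ by ring, hB, hcs]; ring
      exact mul_left_cancel₀ two_ne_zero h2'
    set X : ℂ := (u:ℂ) * c j₁ + (w:ℂ) * c j₂ with hXdef
    have haX : (aχ:ℂ) * X = S := by
      have hcast2 : ((u * s + w * ((aχ:ℤ)-s) : ℤ) : ℂ) = 1 := by rw [huw]; norm_num
      push_cast at hcast2
      calc (aχ:ℂ) * X = (u:ℂ) * ((aχ:ℂ) * c j₁) + (w:ℂ) * ((aχ:ℂ) * c j₂) := by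
            rw [hXdef]; ring
        _ = ((u:ℂ) * (s:ℂ) + (w:ℂ) * ((aχ:ℂ)-s)) * S := by rw [hA', hB']; ring
        _ = S := by rw [hcast2, one_mul]
    refine ⟨X, ?_, haX.symm, ?_⟩
    · exact Subalgebra.add_mem _
        (Subalgebra.mul_mem _ (hmemI u) (hmemc j₁))
        (Subalgebra.mul_mem _ (hmemI w) (hmemc j₂))
    · have hXval : X = S / (aχ:ℂ) := by
        rw [eq_div_iff haC]
        linear_combination haX
      have hcX : (starRingEnd ℂ) X = (starRingEnd ℂ) S / (aχ:ℂ) := by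
        rw [hXval, map_div₀]
        congr 1
        exact Complex.conj_natCast aχ
      have hre : n / ((aχ:ℝ)^2) = 4*(lam:ℝ)/((bχ:ℝ)^2 - (aχ:ℝ)^2) := by
        rw [div_eq_div_iff (by positivity) hba2.ne']
        linarith [hnval]
      calc X * (starRingEnd ℂ) X = (S * (starRingEnd ℂ) S) / ((aχ:ℂ)*(aχ:ℂ)) := by
            rw [hcX, hXval]; ring
        _ = ((n : ℝ) : ℂ) / (((aχ:ℝ)^2 : ℝ) : ℂ) := by
            rw [hSS, show ((aχ:ℂ))*((aχ:ℂ)) = (((aχ:ℝ)^2 : ℝ):ℂ) by push_cast; ring]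
        _ = ((n / ((aχ:ℝ)^2) : ℝ) : ℂ) := (hcast _ _ (by positivity)).symm
        _ = ((4*(lam:ℝ)/((bχ:ℝ)^2 - (aχ:ℝ)^2) : ℝ) : ℂ) := by rw [hre]
        _ = 4*(lam : ℂ) / ((bχ:ℂ)^2 - (aχ:ℂ)^2) := by push_cast; ring
end
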